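/- arXiv:1904.04344 — 7 statements merged into one kernel-verified Lean document; each statement's English description precedes it below -/
import Mathlib

section
/- Let f : [0,∞] → [0,1] be an increasing bijection and d the metric on [0,∞] defined by d(s,t) = |f(s) - f(t)|. Let (ξ_n) be a sequence of [0,∞]-valued random variables and ξ a [0,∞]-valued random variable on a probability space such that for every T ∈ [0,∞) the sequence (ξ_n ∧ T) converges to ξ ∧ T in probability with respect to the Euclidean metric. Then (ξ_n) converges to ξ in probability with respect to the metric d. -/
open MeasureTheory Filter Set
open scoped ENNReal

/-- If `f : [0,∞] → [0,1]` is an increasing bijection and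
`d(s,t) = |f s - f t|`, and if `ξ_n ∧ T → ξ ∧ T` in probability (Euclidean metric)
for every finite `T`, then `ξ_n → ξ` in probability with respect to `d`. -/
theorem stmt_0 {Ω : Type*} [MeasurableSpace Ω] (μ : Measure Ω) [IsProbabilityMeasure μ]
    (f : ℝ≥0∞ → ℝ) (hf_mono : StrictMono f) (hf_bij : Set.BijOn f Set.univ (Set.Icc 0 1))
    (ξ : Ω → ℝ≥0∞) (ξn : ℕ → Ω → ℝ≥0∞)
    (hconv : ∀ T : ℝ, 0 ≤ T → ∀ ε : ℝ, 0 < ε →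
      Tendsto (fun n => μ {ω | ε < |(min (ξn n ω) (ENNReal.ofReal T)).toReal
        - (min (ξ ω) (ENNReal.ofReal T)).toReal|}) atTop (nhds 0)) :
    ∀ ε : ℝ, 0 < ε →
      Tendsto (fun n => μ {ω | ε < |f (ξn n ω) - f (ξ ω)|}) atTop (nhds 0) := by
  -- range of f
  have hrange : Set.range f = Set.Icc (0:ℝ) 1 := by
    rw [← Set.image_univ]; exact hf_bij.image_eq
  have hmem : ∀ x, f x ∈ Set.Icc (0:ℝ) 1 := fun x => hrange ▸ Set.mem_range_self x
  -- f ⊤ = 1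
  have hf_top : f ⊤ = 1 := by
    obtain ⟨x, hx⟩ : (1:ℝ) ∈ Set.range f := hrange ▸ Set.right_mem_Icc.mpr (by norm_num)
    exact le_antisymm (hmem ⊤).2 (hx ▸ hf_mono.monotone le_top)
  -- f is continuous, via order isomorphism
  have hmem' : ∀ x, f x ∈ Set.Icc (0:ℝ) 1 := hmem
  let f' : ℝ≥0∞ → Set.Icc (0:ℝ) 1 := fun x => ⟨f x, hmem x⟩
  have hf'_mono : StrictMono f' := fun a b h => Subtype.mk_lt_mk.mpr (hf_mono h)
  have hf'_surj : Function.Surjective f' := by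
    rintro ⟨y, hy⟩
    obtain ⟨x, -, hx⟩ := hf_bij.surjOn hy
    exact ⟨x, Subtype.ext hx⟩
  let e : ℝ≥0∞ ≃o Set.Icc (0:ℝ) 1 := StrictMono.orderIsoOfSurjective f' hf'_mono hf'_surj
  have hfc : Continuous f := by
    have h1 : Continuous fun x => ((e x : Set.Icc (0:ℝ) 1) : ℝ) :=
      continuous_subtype_val.comp e.continuous
    have h2 : ∀ x, ((e x : Set.Icc (0:ℝ) 1) : ℝ) = f x := fun x => rfl
    simpa [h2] using h1
  intro ε hε
  -- choose truncation level t₀ with f t₀ ≥ 1 - ε/4, t₀ < ∞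
  set c : ℝ := max (1 - ε/4) (1/2) with hc
  have hc1 : c < 1 := max_lt (by linarith) (by norm_num)
  have hc0 : (0:ℝ) ≤ c := le_trans (by norm_num) (le_max_right _ _)
  obtain ⟨t₀, -, ht₀⟩ := hf_bij.surjOn (Set.mem_Icc.mpr ⟨hc0, le_of_lt hc1⟩)
  have ht₀ne : t₀ ≠ ⊤ := by
    intro h; rw [h, hf_top] at ht₀; linarith
  have ht₀ge : 1 - ε/4 ≤ f t₀ := ht₀ ▸ le_max_left _ _
  -- tail bound: for any a, 0 ≤ f a - f (min a t₀) ≤ ε/4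
  have htail : ∀ a : ℝ≥0∞, 0 ≤ f a - f (min a t₀) ∧ f a - f (min a t₀) ≤ ε/4 := by
    intro a
    constructor
    · have := hf_mono.monotone (min_le_left a t₀); linarith
    · rcases le_total a t₀ with h | h
      · rw [min_eq_left h]; linarith
      · rw [min_eq_right h]
        have := (hmem a).2; linarith
  -- uniform continuity of f ∘ ofReal on [0, T]
  set T : ℝ := t₀.toReal with hT
  have hTnn : 0 ≤ T := ENNReal.toReal_nonneg
  have hgc : Continuous fun x : ℝ => f (ENNReal.ofReal x) :=
    hfc.comp ENNReal.continuous_ofReal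
  have huc : UniformContinuousOn (fun x : ℝ => f (ENNReal.ofReal x)) (Set.Icc 0 T) :=
    isCompact_Icc.uniformContinuousOn_of_continuous hgc.continuousOn
  obtain ⟨δ, hδ, hδ'⟩ := (Metric.uniformContinuousOn_iff_le.mp huc) (ε/2) (by linarith)
  -- squeeze
  have hofT : ENNReal.ofReal T = t₀ := ENNReal.ofReal_toReal ht₀ne
  have hsub : ∀ n, {ω | ε < |f (ξn n ω) - f (ξ ω)|} ⊆
      {ω | δ < |(min (ξn n ω) (ENNReal.ofReal T)).toReal
        - (min (ξ ω) (ENNReal.ofReal T)).toReal|} := by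
    intro n ω hω
    simp only [Set.mem_setOf_eq, hofT] at hω ⊢
    by_contra hcon
    push_neg at hcon
    set a := ξn n ω
    set b := ξ ω
    have hameno : min a t₀ ≠ ⊤ := ne_top_of_le_ne_top ht₀ne (min_le_right _ _)
    have hbmeno : min b t₀ ≠ ⊤ := ne_top_of_le_ne_top ht₀ne (min_le_right _ _)
    have hamem : (min a t₀).toReal ∈ Set.Icc (0:ℝ) T :=
      ⟨ENNReal.toReal_nonneg, ENNReal.toReal_mono ht₀ne (min_le_right _ _)⟩
    have hbmem : (min b t₀).toReal ∈ Set.Icc (0:ℝ) T :=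
      ⟨ENNReal.toReal_nonneg, ENNReal.toReal_mono ht₀ne (min_le_right _ _)⟩
    have hdist : dist ((min a t₀).toReal) ((min b t₀).toReal) ≤ δ := by
      rw [Real.dist_eq]; exact hcon
    have hkey := hδ' _ hamem _ hbmem hdist
    rw [ENNReal.ofReal_toReal hameno, ENNReal.ofReal_toReal hbmeno, Real.dist_eq] at hkey
    have h1 := htail a
    have h2 := htail b
    have habs := abs_le.mp hkey
    have : |f a - f b| ≤ ε := by
      rw [abs_le]
      constructor <;> [nlinarith [h1.1, h1.2, h2.1, h2.2, habs.1, habs.2];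
        nlinarith [h1.1, h1.2, h2.1, h2.2, habs.1, habs.2]]
    linarith [hω, this]
  exact tendsto_of_tendsto_of_tendsto_of_le_of_le tendsto_const_nhds
    (hconv T hTnn δ hδ) (fun n => zero_le) (fun n => measure_mono (hsub n))
end

section
/- The function ψ : (0,1] → ℝ defined by ψ(x) = [(1+√x)·log(1+√x) + (1-√x)·log(1-√x)] / x (with the convention 0·log 0 = 0, so ψ(1) = 2·log 2) is continuous, strictly increasing, and is a bijection from (0,1] onto (1, 2·log 2]. In particular, lim_{x→0+} ψ(x) = 1. -/
open Set Real Filter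


noncomputable def G (t : ℝ) : ℝ := (1+t)*Real.log (1+t) + (1-t)*Real.log (1-t)
noncomputable def F (t : ℝ) : ℝ := G t / t^2

lemma contG : Continuous G := by
  have h := Real.continuous_mul_log
  exact (h.comp (continuous_const.add continuous_id)).add
    (h.comp (continuous_const.sub continuous_id))

lemma hasDerivAt_G {t : ℝ} (h1 : 1 + t ≠ 0) (h2 : 1 - t ≠ 0) :
    HasDerivAt G (Real.log (1+t) - Real.log (1-t)) t := by
  have d1 : HasDerivAt (fun t : ℝ => 1 + t) 1 t := by
    simpa using (hasDerivAt_id t).const_add 1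
  have d2 : HasDerivAt (fun t : ℝ => 1 - t) (-1) t := by
    simpa using (hasDerivAt_id t).const_sub 1
  have l1 : HasDerivAt (fun t : ℝ => Real.log (1+t)) ((1+t)⁻¹) t := by
    simpa [Function.comp_def] using (Real.hasDerivAt_log h1).comp t d1
  have l2 : HasDerivAt (fun t : ℝ => Real.log (1-t)) (-(1-t)⁻¹) t := by
    simpa [Function.comp_def] using (Real.hasDerivAt_log h2).comp t d2
  have := (d1.mul l1).add (d2.mul l2)
  refine this.congr_deriv ?_
  field_simp
  ring

lemma G0 : G 0 = 0 := by simp [G]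

lemma G1 : G 1 = 2 * Real.log 2 := by norm_num [G]

/-- Generic: f(0)=0, continuous on `Ico 0 1`, positive derivative on `Ioo 0 1`
implies f > 0 on `Ioo 0 1`. -/
lemma pos_on_Ioo {f f' : ℝ → ℝ} (hc : ContinuousOn f (Set.Ico 0 1))
    (hd : ∀ t ∈ Set.Ioo (0:ℝ) 1, HasDerivAt f (f' t) t)
    (hp : ∀ t ∈ Set.Ioo (0:ℝ) 1, 0 < f' t) (h0 : f 0 = 0) :
    ∀ t ∈ Set.Ioo (0:ℝ) 1, 0 < f t := by
  have hmono : StrictMonoOn f (Set.Ico 0 1) := by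
    apply strictMonoOn_of_deriv_pos (convex_Ico 0 1) hc
    intro t ht
    rw [interior_Ico] at ht
    rw [(hd t ht).deriv]
    exact hp t ht
  intro t ht
  have := hmono (by constructor <;> norm_num) ⟨le_of_lt ht.1, ht.2⟩ ht.1
  rwa [h0] at this

lemma pos_on_Ioc {f f' : ℝ → ℝ} (hc : ContinuousOn f (Set.Icc 0 1))
    (hd : ∀ t ∈ Set.Ioo (0:ℝ) 1, HasDerivAt f (f' t) t)
    (hp : ∀ t ∈ Set.Ioo (0:ℝ) 1, 0 < f' t) (h0 : f 0 = 0) :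
    ∀ t ∈ Set.Ioc (0:ℝ) 1, 0 < f t := by
  have hmono : StrictMonoOn f (Set.Icc 0 1) := by
    apply strictMonoOn_of_deriv_pos (convex_Icc 0 1) hc
    intro t ht
    rw [interior_Icc] at ht
    rw [(hd t ht).deriv]
    exact hp t ht
  intro t ht
  have := hmono (by constructor <;> norm_num) ⟨le_of_lt ht.1, ht.2⟩ ht.1
  rwa [h0] at this

noncomputable def K (t : ℝ) : ℝ := 2*t/(1-t^2) - (Real.log (1+t) - Real.log (1-t))
noncomputable def Q (t : ℝ) : ℝ := Real.log (1+t) - Real.log (1-t) - 2*t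
noncomputable def H (t : ℝ) : ℝ := t*(Real.log (1+t) - Real.log (1-t)) - 2 * G t
noncomputable def R (t : ℝ) : ℝ := t^2/(1-t^2) - G t

lemma basic_ne {t : ℝ} (ht : t ∈ Set.Ioo (-1:ℝ) 1) :
    1 + t ≠ 0 ∧ 1 - t ≠ 0 ∧ 1 - t^2 ≠ 0 := by
  obtain ⟨h1, h2⟩ := ht
  refine ⟨by linarith, by linarith, ?_⟩
  have : (0:ℝ) < 1 - t^2 := by nlinarith
  linarith

lemma hasDerivAt_logdiff {t : ℝ} (ht : t ∈ Set.Ioo (-1:ℝ) 1) :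
    HasDerivAt (fun t : ℝ => Real.log (1+t) - Real.log (1-t)) (2/(1-t^2)) t := by
  obtain ⟨h1, h2, h3⟩ := basic_ne ht
  have d1 : HasDerivAt (fun t : ℝ => 1 + t) 1 t := by
    simpa using (hasDerivAt_id t).const_add 1
  have d2 : HasDerivAt (fun t : ℝ => 1 - t) (-1) t := by
    simpa using (hasDerivAt_id t).const_sub 1
  have l1 : HasDerivAt (fun t : ℝ => Real.log (1+t)) ((1+t)⁻¹) t := by
    simpa [Function.comp_def] using (Real.hasDerivAt_log h1).comp t d1
  have l2 : HasDerivAt (fun t : ℝ => Real.log (1-t)) (-(1-t)⁻¹) t := by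
    simpa [Function.comp_def] using (Real.hasDerivAt_log h2).comp t d2
  have := l1.sub l2
  refine this.congr_deriv ?_
  field_simp
  ring

lemma hasDerivAt_K {t : ℝ} (ht : t ∈ Set.Ioo (-1:ℝ) 1) :
    HasDerivAt K (4*t^2/(1-t^2)^2) t := by
  obtain ⟨h1, h2, h3⟩ := basic_ne ht
  have d1 : HasDerivAt (fun t : ℝ => 2*t) 2 t := by
    simpa using (hasDerivAt_id t).const_mul 2
  have d2 : HasDerivAt (fun t : ℝ => 1 - t^2) (-(2*t)) t := by
    simpa using ((hasDerivAt_pow 2 t).const_sub 1)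
  have dq : HasDerivAt (fun t : ℝ => 2*t/(1-t^2))
      ((2*(1-t^2) - 2*t*(-(2*t)))/(1-t^2)^2) t := d1.div d2 h3
  have := dq.sub (hasDerivAt_logdiff ht)
  refine this.congr_deriv ?_
  field_simp
  ring

lemma hasDerivAt_Q {t : ℝ} (ht : t ∈ Set.Ioo (-1:ℝ) 1) :
    HasDerivAt Q (2*t^2/(1-t^2)) t := by
  obtain ⟨h1, h2, h3⟩ := basic_ne ht
  have d1 : HasDerivAt (fun t : ℝ => 2*t) 2 t := by
    simpa using (hasDerivAt_id t).const_mul 2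
  have := (hasDerivAt_logdiff ht).sub d1
  refine this.congr_deriv ?_
  field_simp
  ring

lemma hasDerivAt_H {t : ℝ} (ht : t ∈ Set.Ioo (-1:ℝ) 1) :
    HasDerivAt H (K t) t := by
  obtain ⟨h1, h2, h3⟩ := basic_ne ht
  have d1 := (hasDerivAt_id t).mul (hasDerivAt_logdiff ht)
  have d2 := (hasDerivAt_G h1 h2).const_mul 2
  have := d1.sub d2
  refine this.congr_deriv ?_
  unfold K id
  field_simp
  ring

lemma hasDerivAt_R {t : ℝ} (ht : t ∈ Set.Ioo (-1:ℝ) 1) :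
    HasDerivAt R (2*t/(1-t^2)^2 - (Real.log (1+t) - Real.log (1-t))) t := by
  obtain ⟨h1, h2, h3⟩ := basic_ne ht
  have d2 : HasDerivAt (fun t : ℝ => 1 - t^2) (-(2*t)) t := by
    simpa using ((hasDerivAt_pow 2 t).const_sub 1)
  have dq : HasDerivAt (fun t : ℝ => t^2/(1-t^2))
      ((2*t^1*(1-t^2) - t^2*(-(2*t)))/(1-t^2)^2) t := (hasDerivAt_pow 2 t).div d2 h3
  have := dq.sub (hasDerivAt_G h1 h2)
  refine this.congr_deriv ?_
  field_simp
  ring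

lemma Ico_sub : Set.Ico (0:ℝ) 1 ⊆ Set.Ioo (-1:ℝ) 1 := fun t ht => ⟨by linarith [ht.1], ht.2⟩
lemma Ioo_sub : Set.Ioo (0:ℝ) 1 ⊆ Set.Ioo (-1:ℝ) 1 := fun t ht => ⟨by linarith [ht.1], ht.2⟩

lemma K_pos : ∀ t ∈ Set.Ioo (0:ℝ) 1, 0 < K t := by
  apply pos_on_Ioo (f' := fun t => 4*t^2/(1-t^2)^2)
  · intro t ht
    exact (hasDerivAt_K (Ico_sub ht)).continuousAt.continuousWithinAt
  · intro t ht; exact hasDerivAt_K (Ioo_sub ht)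
  · intro t ht
    obtain ⟨h1, h2⟩ := ht
    have : (0:ℝ) < 1 - t^2 := by nlinarith
    positivity
  · norm_num [K]

lemma Q_pos : ∀ t ∈ Set.Ioo (0:ℝ) 1, 0 < Q t := by
  apply pos_on_Ioo (f' := fun t => 2*t^2/(1-t^2))
  · intro t ht
    exact (hasDerivAt_Q (Ico_sub ht)).continuousAt.continuousWithinAt
  · intro t ht; exact hasDerivAt_Q (Ioo_sub ht)
  · intro t ht
    obtain ⟨h1, h2⟩ := ht
    have : (0:ℝ) < 1 - t^2 := by nlinarith
    positivity
  · norm_num [Q]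

lemma H_pos : ∀ t ∈ Set.Ioo (0:ℝ) 1, 0 < H t := by
  apply pos_on_Ioo (f' := K)
  · intro t ht
    exact (hasDerivAt_H (Ico_sub ht)).continuousAt.continuousWithinAt
  · intro t ht; exact hasDerivAt_H (Ioo_sub ht)
  · exact K_pos
  · norm_num [H, G0]

lemma R_pos : ∀ t ∈ Set.Ioo (0:ℝ) 1, 0 < R t := by
  apply pos_on_Ioo
    (f' := fun t => 2*t/(1-t^2)^2 - (Real.log (1+t) - Real.log (1-t)))
  · intro t ht
    exact (hasDerivAt_R (Ico_sub ht)).continuousAt.continuousWithinAt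
  · intro t ht; exact hasDerivAt_R (Ioo_sub ht)
  · intro t ht
    obtain ⟨h1, h2⟩ := ht
    have ht2 : (0:ℝ) < 1 - t^2 := by nlinarith
    have hK := K_pos t ⟨h1, h2⟩
    unfold K at hK
    have hle : 2*t/(1-t^2) ≤ 2*t/(1-t^2)^2 := by
      rw [div_le_div_iff₀ ht2 (by positivity)]
      nlinarith [mul_nonneg (mul_nonneg h1.le ht2.le) (sq_nonneg t)]
    linarith
  · norm_num [R, G0]

/-- `G t > t^2` on `(0,1]`. -/
lemma P_pos : ∀ t ∈ Set.Ioc (0:ℝ) 1, 0 < G t - t^2 := by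
  apply pos_on_Ioc (f' := Q)
  · exact (contG.sub (continuous_pow 2)).continuousOn
  · intro t ht
    obtain ⟨h1, h2, h3⟩ := basic_ne (Ioo_sub ht)
    have := (hasDerivAt_G h1 h2).sub (hasDerivAt_pow 2 t)
    refine this.congr_deriv ?_
    unfold Q
    ring
  · exact Q_pos
  · norm_num [G0]

lemma F_mono : StrictMonoOn F (Set.Ioc 0 1) := by
  apply strictMonoOn_of_deriv_pos (convex_Ioc 0 1)
  · exact ContinuousOn.div contG.continuousOn (continuous_pow 2).continuousOn
      (fun t ht => pow_ne_zero 2 (ne_of_gt ht.1))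
  · intro t ht
    rw [interior_Ioc] at ht
    obtain ⟨h1, h2, h3⟩ := basic_ne (Ioo_sub ht)
    have hd : HasDerivAt F
        (((Real.log (1+t) - Real.log (1-t))*t^2 - G t*(2*t^1))/(t^2)^2) t :=
      (hasDerivAt_G h1 h2).div (hasDerivAt_pow 2 t) (pow_ne_zero 2 (ne_of_gt ht.1))
    rw [hd.deriv]
    apply div_pos
    · have hH := H_pos t ht
      unfold H at hH
      nlinarith [mul_pos ht.1 hH]
    · exact pow_pos (pow_pos ht.1 2) 2
  
lemma F_gt_one {t : ℝ} (ht : t ∈ Set.Ioc (0:ℝ) 1) : 1 < F t := by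
  have hP := P_pos t ht
  have ht2 : (0:ℝ) < t^2 := pow_pos ht.1 2
  unfold F
  rw [lt_div_iff₀ ht2]
  linarith

lemma F_lt {t : ℝ} (ht : t ∈ Set.Ioo (0:ℝ) 1) : F t < (1-t^2)⁻¹ := by
  have hR := R_pos t ht
  have ht2 : (0:ℝ) < t^2 := pow_pos ht.1 2
  have h12 : (0:ℝ) < 1 - t^2 := by nlinarith [ht.1, ht.2]
  unfold R at hR
  have hG : G t < t^2 * (1-t^2)⁻¹ := by rw [← div_eq_mul_inv]; linarith
  unfold F
  rw [div_lt_iff₀ ht2]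
  linarith [mul_comm (t^2) (1-t^2)⁻¹]

lemma psi_eq {x : ℝ} (hx : 0 ≤ x) :
    ((1+Real.sqrt x)*Real.log (1+Real.sqrt x)+(1-Real.sqrt x)*Real.log (1-Real.sqrt x))/x
      = F (Real.sqrt x) := by
  unfold F G; rw [Real.sq_sqrt hx]

lemma sqrt_mem {x : ℝ} (hx : x ∈ Set.Ioc (0:ℝ) 1) : Real.sqrt x ∈ Set.Ioc (0:ℝ) 1 := by
  constructor
  · exact Real.sqrt_pos.2 hx.1
  · rw [show (1:ℝ) = Real.sqrt 1 by rw [Real.sqrt_one]]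
    exact Real.sqrt_le_sqrt hx.2

lemma sqrt_mem_Ioo {x : ℝ} (hx : x ∈ Set.Ioo (0:ℝ) 1) : Real.sqrt x ∈ Set.Ioo (0:ℝ) 1 := by
  refine ⟨Real.sqrt_pos.2 hx.1, ?_⟩
  have := Real.sqrt_lt_sqrt hx.1.le hx.2
  rwa [Real.sqrt_one] at this

/-- `ψ(x) = ((1+√x)log(1+√x) + (1-√x)log(1-√x))/x` is continuous and
strictly increasing on `(0,1]`, a bijection from `(0,1]` onto `(1, 2 log 2]`, and
`ψ(x) → 1` as `x → 0+`. -/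
theorem stmt_6 :
    let ψ : ℝ → ℝ := fun x =>
      ((1 + Real.sqrt x) * Real.log (1 + Real.sqrt x) +
        (1 - Real.sqrt x) * Real.log (1 - Real.sqrt x)) / x
    ContinuousOn ψ (Set.Ioc 0 1) ∧ StrictMonoOn ψ (Set.Ioc 0 1) ∧
      Set.BijOn ψ (Set.Ioc 0 1) (Set.Ioc 1 (2 * Real.log 2)) ∧
      Tendsto ψ (nhdsWithin 0 (Set.Ioi 0)) (nhds 1) := by
  intro ψ
  have hψeq : ∀ x : ℝ, 0 ≤ x → ψ x = F (Real.sqrt x) := fun x hx => psi_eq hx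
  -- continuity
  have hcont : ContinuousOn ψ (Set.Ioc 0 1) := by
    apply ContinuousOn.div _ continuousOn_id (fun x hx => ne_of_gt hx.1)
    have hm := Real.continuous_mul_log
    exact ((hm.comp (continuous_const.add Real.continuous_sqrt)).add
      (hm.comp (continuous_const.sub Real.continuous_sqrt))).continuousOn
  -- strict monotonicity
  have hmono : StrictMonoOn ψ (Set.Ioc 0 1) := by
    intro x hx y hy hxy
    rw [hψeq x hx.1.le, hψeq y hy.1.le]
    exact F_mono (sqrt_mem hx) (sqrt_mem hy) (Real.sqrt_lt_sqrt hx.1.le hxy)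
  -- value at 1
  have hψ1 : ψ 1 = 2 * Real.log 2 := by
    rw [hψeq 1 (by norm_num), Real.sqrt_one]
    unfold F
    rw [G1]
    norm_num
  -- the limit
  have hub : ∀ᶠ x in nhdsWithin (0:ℝ) (Set.Ioi 0), ψ x ≤ (1-x)⁻¹ := by
    filter_upwards [Ioo_mem_nhdsGT_of_mem (by norm_num : (0:ℝ) ∈ Set.Ico 0 1)] with x hx
    rw [hψeq x hx.1.le]
    have h := F_lt (sqrt_mem_Ioo hx)
    rw [Real.sq_sqrt hx.1.le] at h
    exact h.le
  have hlb : ∀ᶠ x in nhdsWithin (0:ℝ) (Set.Ioi 0), 1 ≤ ψ x := by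
    filter_upwards [Ioo_mem_nhdsGT_of_mem (by norm_num : (0:ℝ) ∈ Set.Ico 0 1)] with x hx
    rw [hψeq x hx.1.le]
    exact (F_gt_one (sqrt_mem ⟨hx.1, hx.2.le⟩)).le
  have htop : Tendsto (fun x : ℝ => (1-x)⁻¹) (nhdsWithin (0:ℝ) (Set.Ioi 0)) (nhds 1) := by
    have hca : ContinuousAt (fun x : ℝ => (1-x)⁻¹) 0 := by
      apply ContinuousAt.inv₀ (continuous_const.sub continuous_id).continuousAt
      norm_num
    have h := hca.tendsto
    norm_num at h
    exact tendsto_nhdsWithin_of_tendsto_nhds h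
  have hlim : Tendsto ψ (nhdsWithin (0:ℝ) (Set.Ioi 0)) (nhds 1) :=
    tendsto_of_tendsto_of_tendsto_of_le_of_le' tendsto_const_nhds htop hlb hub
  refine ⟨hcont, hmono, ⟨?_, hmono.injOn, ?_⟩, hlim⟩
  -- MapsTo
  · intro x hx
    constructor
    · rw [hψeq x hx.1.le]
      exact F_gt_one (sqrt_mem hx)
    · have := hmono.monotoneOn hx ⟨one_pos, le_refl 1⟩ hx.2
      rwa [hψ1] at this
  -- SurjOn
  · intro y hy
    have h1 : ∀ᶠ x in nhdsWithin (0:ℝ) (Set.Ioi 0), ψ x < y :=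
      hlim.eventually_lt_const hy.1
    have h2 : ∀ᶠ x in nhdsWithin (0:ℝ) (Set.Ioi 0), x ∈ Set.Ioo (0:ℝ) 1 :=
      eventually_of_mem (Ioo_mem_nhdsGT_of_mem (by norm_num : (0:ℝ) ∈ Set.Ico 0 1))
        (fun x hx => hx)
    obtain ⟨x₀, hlt, hmem⟩ := (h1.and h2).exists
    have hsub : Set.Icc x₀ 1 ⊆ Set.Ioc 0 1 := fun z hz => ⟨lt_of_lt_of_le hmem.1 hz.1, hz.2⟩
    have hivt := intermediate_value_Icc hmem.2.le (hcont.mono hsub)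
    have hyin : y ∈ Set.Icc (ψ x₀) (ψ 1) := ⟨hlt.le, by rw [hψ1]; exact hy.2⟩
    obtain ⟨c, hc, hfc⟩ := hivt hyin
    exact ⟨c, hsub hc, hfc⟩
end

section
/- Fix p ∈ (-∞, 1) \ ([-1/2, 0] ∪ {1/2}). The function ψ : (0,1] → ℝ defined by ψ(x) = [2 - (1 + x^{1-p})^{2(1-p)} - (1 - x^{1-p})^{2(1-p)}] / [2(2p-1)(1-p)·x^{2(1-p)}] is continuous, strictly increasing, and a bijection from (0,1] onto the interval (1, (1 - 2^{1-2p})/((2p-1)(1-p))]. In particular, lim_{x→0+} ψ(x) = 1. -/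
open Set Real Filter Topology

lemma hda (r t : ℝ) (h : -1 < t) :
    HasDerivAt (fun s : ℝ => (1 + s) ^ r) (r * (1 + t) ^ (r - 1)) t := by
  have h1 : (1 : ℝ) + t ≠ 0 := by linarith
  have := (Real.hasDerivAt_rpow_const (p := r) (Or.inl h1)).comp t
    ((hasDerivAt_id t).const_add 1)
  convert this using 1
  rfl
  rfl
  rfl
  simp

lemma hds (r t : ℝ) (h : t < 1) :
    HasDerivAt (fun s : ℝ => (1 - s) ^ r) (-(r * (1 - t) ^ (r - 1))) t := by
  have h1 : (1 : ℝ) - t ≠ 0 := by linarith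
  have := (Real.hasDerivAt_rpow_const (p := r) (Or.inl h1)).comp t
    ((hasDerivAt_id t).const_sub 1)
  convert this using 1
  rfl
  rfl
  rfl
  simp

noncomputable def N0 (q t : ℝ) : ℝ := 2 - (1 + t) ^ q - (1 - t) ^ q
noncomputable def N1 (q t : ℝ) : ℝ := -(q * (1 + t) ^ (q - 1)) + q * (1 - t) ^ (q - 1)
noncomputable def N2 (q t : ℝ) : ℝ := -(q * (q - 1)) * ((1 + t) ^ (q - 2) + (1 - t) ^ (q - 2))
noncomputable def N3 (q t : ℝ) : ℝ :=
  q * (q - 1) * (q - 2) * ((1 - t) ^ (q - 3) - (1 + t) ^ (q - 3))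
noncomputable def Faux (q t : ℝ) : ℝ := N0 q t / (q * (1 - q) * t ^ 2)

lemma hN0 (q t : ℝ) (ht : t ∈ Ioo (-1 : ℝ) 1) : HasDerivAt (N0 q) (N1 q t) t := by
  have h1 := hda q t ht.1
  have h2 := hds q t ht.2
  have := ((hasDerivAt_const t (2:ℝ)).sub h1).sub h2
  convert this using 1
  rfl
  rfl
  rfl
  simp only [N1]; ring

lemma hN1 (q t : ℝ) (ht : t ∈ Ioo (-1 : ℝ) 1) : HasDerivAt (N1 q) (N2 q t) t := by
  have h1 := (hda (q-1) t ht.1).const_mul q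
  have h2 := (hds (q-1) t ht.2).const_mul q
  have := h1.neg.add h2
  convert this using 1
  rfl
  rfl
  rfl
  rw [show q - 1 - 1 = q - 2 from by ring]
  simp [N2]; ring

lemma hN2 (q t : ℝ) (ht : t ∈ Ioo (-1 : ℝ) 1) : HasDerivAt (N2 q) (N3 q t) t := by
  have h1 := (hda (q-2) t ht.1)
  have h2 := (hds (q-2) t ht.2)
  have := (h1.add h2).const_mul (-(q * (q - 1)))
  convert this using 1
  rfl
  rfl
  rfl
  rw [show q - 2 - 1 = q - 3 from by ring]
  simp [N3]; ring

lemma N0_zero (q : ℝ) : N0 q 0 = 0 := by simp [N0]; ring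
lemma N1_zero (q : ℝ) : N1 q 0 = 0 := by simp [N1]
lemma N2_zero (q : ℝ) : N2 q 0 = -(q * (q - 1)) * 2 := by simp only [N2]; norm_num

lemma chain (c : ℝ) (f f' : ℝ → ℝ) (h0 : f 0 = 0)
    (hf : ∀ t ∈ Ico (0:ℝ) 1, HasDerivAt f (f' t) t)
    (hpos : ∀ t ∈ Ioo (0:ℝ) 1, 0 < c * f' t) :
    ∀ t ∈ Ioo (0:ℝ) 1, 0 < c * f t := by
  have hmono : StrictMonoOn (fun t => c * f t) (Ico 0 1) := by
    apply strictMonoOn_of_deriv_pos (convex_Ico 0 1)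
    · exact fun t ht => ((hf t ht).const_mul c).continuousAt.continuousWithinAt
    · intro t ht
      rw [interior_Ico] at ht
      rw [((hf t ⟨ht.1.le, ht.2⟩).const_mul c).deriv]
      exact hpos t ht
  intro t ht
  have := hmono ⟨le_refl 0, one_pos⟩ ⟨ht.1.le, ht.2⟩ ht.1
  simpa [h0] using this

theorem Faux_props (q : ℝ) (hq0 : 0 < q) (hq1 : q ≠ 1)
    (hq3 : ∀ t ∈ Ioo (0:ℝ) 1, (q - 2) * ((1 - t) ^ (q - 3) - (1 + t) ^ (q - 3)) < 0) :
    ContinuousOn (Faux q) (Ioc 0 1) ∧ StrictMonoOn (Faux q) (Ioc 0 1) ∧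
      BijOn (Faux q) (Ioc 0 1) (Ioc 1 (Faux q 1)) ∧
      Tendsto (Faux q) (𝓝[>] 0) (𝓝 1) := by
  set c : ℝ := q * (1 - q) with hcdef
  have hc : c ≠ 0 := mul_ne_zero hq0.ne' (sub_ne_zero.mpr (Ne.symm hq1))
  have hsub' : Ico (0:ℝ) 1 ⊆ Ioo (-1:ℝ) 1 := fun t ht => ⟨by linarith [ht.1], ht.2⟩
  -- sign of c * N3
  have hN3pos : ∀ t ∈ Ioo (0:ℝ) 1, 0 < c * N3 q t := by
    intro t ht
    have hD := hq3 t ht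
    have hne : q * (q - 1) ≠ 0 := mul_ne_zero hq0.ne' (sub_ne_zero.mpr hq1)
    have hsq : 0 < (q * (q - 1)) ^ 2 := by positivity
    have heq : c * N3 q t =
        -((q * (q - 1)) ^ 2) * ((q - 2) * ((1 - t) ^ (q - 3) - (1 + t) ^ (q - 3))) := by
      simp only [N3, hcdef]; ring
    rw [heq]
    exact mul_pos_of_neg_of_neg (by linarith) hD
  -- first chain: w t = t * N2 - N1
  have hw : ∀ t ∈ Ioo (0:ℝ) 1, 0 < c * (t * N2 q t - N1 q t) := by
    apply chain c _ (fun t => t * N3 q t)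
    · simp [N1_zero]
    · intro t ht
      have := ((hasDerivAt_id t).mul (hN2 q t (hsub' ht))).sub (hN1 q t (hsub' ht))
      convert this using 1
      rfl
      rfl
      rfl
      simp only [id_eq]; ring
    · intro t ht
      have h1 : c * (t * N3 q t) = t * (c * N3 q t) := by ring
      rw [h1]
      exact mul_pos ht.1 (hN3pos t ht)
  -- second chain: u t = t * N1 - 2 * N0
  have hu : ∀ t ∈ Ioo (0:ℝ) 1, 0 < c * (t * N1 q t - 2 * N0 q t) := by
    apply chain c _ (fun t => t * N2 q t - N1 q t)
    · simp [N0_zero, N1_zero]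
    · intro t ht
      have := ((hasDerivAt_id t).mul (hN1 q t (hsub' ht))).sub
        ((hN0 q t (hsub' ht)).const_mul 2)
      convert this using 1
      rfl
      rfl
      rfl
      simp only [id_eq]; ring
    · exact hw
  -- derivative of Faux on Ioo 0 1
  have hden : ∀ t : ℝ, HasDerivAt (fun t => c * t ^ 2) (c * (2 * t)) t := by
    intro t
    have := (hasDerivAt_pow 2 t).const_mul c
    convert this using 1
    rfl
    rfl
    ring
  have hdne : ∀ t ∈ Ioo (0:ℝ) 1, c * t ^ 2 ≠ 0 :=
    fun t ht => mul_ne_zero hc (pow_ne_zero _ ht.1.ne')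
  have hF : ∀ t ∈ Ioo (0:ℝ) 1, HasDerivAt (Faux q)
      ((N1 q t * (c * t ^ 2) - N0 q t * (c * (2 * t))) / (c * t ^ 2) ^ 2) t := by
    intro t ht
    exact (hN0 q t (hsub' ⟨ht.1.le, ht.2⟩)).div (hden t) (hdne t ht)
  have hFpos : ∀ t ∈ Ioo (0:ℝ) 1,
      0 < (N1 q t * (c * t ^ 2) - N0 q t * (c * (2 * t))) / (c * t ^ 2) ^ 2 := by
    intro t ht
    apply div_pos
    · have h1 : N1 q t * (c * t ^ 2) - N0 q t * (c * (2 * t)) =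
          t * (c * (t * N1 q t - 2 * N0 q t)) := by ring
      rw [h1]
      exact mul_pos ht.1 (hu t ht)
    · rw [pow_two]
      exact mul_self_pos.mpr (hdne t ht)
  -- continuity
  have hcont : ContinuousOn (Faux q) (Ioc 0 1) := by
    apply ContinuousOn.div
    · apply ContinuousOn.sub
      apply ContinuousOn.sub
      · exact continuousOn_const
      · exact ContinuousOn.rpow_const
          ((continuous_const.add continuous_id).continuousOn)
          (fun t ht => Or.inr hq0.le)
      · exact ContinuousOn.rpow_const
          ((continuous_const.sub continuous_id).continuousOn)
          (fun t ht => Or.inr hq0.le)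
    · exact (continuous_const.mul (continuous_pow 2)).continuousOn
    · exact fun t ht => mul_ne_zero hc (pow_ne_zero _ ht.1.ne')
  -- strict monotonicity
  have hmono : StrictMonoOn (Faux q) (Ioc 0 1) := by
    apply strictMonoOn_of_deriv_pos (convex_Ioc 0 1) hcont
    intro t ht
    rw [interior_Ioc] at ht
    rw [(hF t ht).deriv]
    exact hFpos t ht
  -- limit at 0+
  have hlim : Tendsto (Faux q) (𝓝[>] 0) (𝓝 1) := by
    have hslope : Tendsto (fun t => N1 q t / t) (𝓝[≠] (0:ℝ)) (𝓝 (N2 q 0)) := by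
      have h := hN1 q 0 ⟨by norm_num, one_pos⟩
      rw [hasDerivAt_iff_tendsto_slope] at h
      refine h.congr fun t => ?_
      simp [slope_def_field, N1_zero, div_eq_div_iff]
    have hdiv : Tendsto (fun t => N1 q t / (c * (2 * t))) (𝓝[>] (0:ℝ)) (𝓝 1) := by
      have h2 := (hslope.mono_left
        (nhdsWithin_mono _ (fun x (hx : x ∈ Ioi (0:ℝ)) => ne_of_gt hx))).div_const (2 * c)
      have hval : N2 q 0 / (2 * c) = 1 := by
        rw [N2_zero, hcdef]
        field_simp
        ring
      rw [hval] at h2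
      refine h2.congr fun t => ?_
      rw [div_div]
      ring_nf
    have := HasDerivAt.lhopital_zero_right_on_Ioo one_pos
      (f := N0 q) (f' := N1 q) (g := fun t => c * t ^ 2) (g' := fun t => c * (2 * t))
      (fun t ht => hN0 q t (hsub' ⟨ht.1.le, ht.2⟩))
      (fun t ht => hden t)
      (fun t ht => mul_ne_zero hc (mul_pos two_pos ht.1).ne')
      (by
        have := (hN0 q 0 ⟨by norm_num, one_pos⟩).continuousAt.tendsto
        rw [N0_zero] at this
        exact this.mono_left nhdsWithin_le_nhds)
      (by
        have : Tendsto (fun t : ℝ => c * t ^ 2) (𝓝 0) (𝓝 (c * 0 ^ 2)) :=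
          (continuous_const.mul (continuous_pow 2)).tendsto 0
        simpa using this.mono_left nhdsWithin_le_nhds)
      hdiv
    exact this
  refine ⟨hcont, hmono, ?_, hlim⟩
  -- bijection
  have hge : ∀ z ∈ Ioc (0:ℝ) 1, 1 ≤ Faux q z := by
    intro z hz
    refine le_of_tendsto hlim ?_
    filter_upwards [Ioo_mem_nhdsGT_of_mem (show (0:ℝ) ∈ Ico 0 z from ⟨le_refl 0, hz.1⟩)]
      with w hw
    exact (hmono ⟨hw.1, hw.2.le.trans hz.2⟩ hz hw.2).le
  have hmaps : MapsTo (Faux q) (Ioc 0 1) (Ioc 1 (Faux q 1)) := by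
    intro x hx
    constructor
    · have hy : x / 2 ∈ Ioc (0:ℝ) 1 := ⟨by linarith [hx.1], by linarith [hx.1, hx.2]⟩
      have := hmono hy hx (by linarith [hx.1])
      exact lt_of_le_of_lt (hge _ hy) this
    · exact hmono.monotoneOn hx ⟨zero_lt_one, le_refl 1⟩ hx.2
  refine ⟨hmaps, hmono.injOn, ?_⟩
  intro z hz
  have h1 : ∀ᶠ w in 𝓝[>] (0:ℝ), Faux q w < z := hlim.eventually_lt_const hz.1
  have h2 : Ioo (0:ℝ) 1 ∈ 𝓝[>] (0:ℝ) :=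
    Ioo_mem_nhdsGT_of_mem ⟨le_refl 0, one_pos⟩
  obtain ⟨w, hw1, hw2⟩ := (h1.and (eventually_of_mem h2 (fun x hx => hx))).exists
  have hIcc : Icc w 1 ⊆ Ioc (0:ℝ) 1 := fun y hy => ⟨lt_of_lt_of_le hw2.1 hy.1, hy.2⟩
  have hIVT := intermediate_value_Icc hw2.2.le (hcont.mono hIcc)
  have hzmem : z ∈ Icc (Faux q w) (Faux q 1) := ⟨hw1.le, hz.2⟩
  obtain ⟨x, hx1, hx2⟩ := hIVT hzmem
  exact ⟨x, hIcc hx1, hx2⟩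

/-- for `p ∈ (-∞,1) \ ([-1/2,0] ∪ {1/2})`, the function
`ψ(x) = (2 - (1+x^{1-p})^{2(1-p)} - (1-x^{1-p})^{2(1-p)}) / (2(2p-1)(1-p) x^{2(1-p)})`
is continuous, strictly increasing, a bijection from `(0,1]` onto
`(1, (1-2^{1-2p})/((2p-1)(1-p))]`, and `ψ(x) → 1` as `x → 0+`. -/
theorem stmt_7 (p : ℝ) (hp : p < 1) (hp' : p ∉ Set.Icc (-(1 / 2) : ℝ) 0)
    (hp'' : p ≠ 1 / 2) :
    let ψ : ℝ → ℝ := fun x =>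
      (2 - (1 + x ^ (1 - p)) ^ (2 * (1 - p)) - (1 - x ^ (1 - p)) ^ (2 * (1 - p))) /
        (2 * (2 * p - 1) * (1 - p) * x ^ (2 * (1 - p)))
    ContinuousOn ψ (Set.Ioc 0 1) ∧ StrictMonoOn ψ (Set.Ioc 0 1) ∧
      Set.BijOn ψ (Set.Ioc 0 1)
        (Set.Ioc 1 ((1 - 2 ^ (1 - 2 * p)) / ((2 * p - 1) * (1 - p)))) ∧
      Tendsto ψ (nhdsWithin 0 (Set.Ioi 0)) (nhds 1) := by
  intro ψ
  have h1p : (0:ℝ) < 1 - p := by linarith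
  have hq0 : (0:ℝ) < 2 * (1 - p) := by linarith
  have hq1 : 2 * (1 - p) ≠ 1 := by
    intro h; apply hp''; linarith
  have hq3 : ∀ t ∈ Ioo (0:ℝ) 1,
      (2 * (1 - p) - 2) * ((1 - t) ^ (2 * (1 - p) - 3) - (1 + t) ^ (2 * (1 - p) - 3)) < 0 := by
    intro t ht
    have ht1 : (0:ℝ) < 1 - t := by linarith [ht.2]
    have ht2 : 1 - t < 1 + t := by linarith [ht.1]
    rcases lt_or_ge p (-(1/2)) with hneg | hge2
    · have h3 : 0 < 2 * (1 - p) - 3 := by linarith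
      have hD : (1 - t) ^ (2 * (1 - p) - 3) < (1 + t) ^ (2 * (1 - p) - 3) :=
        Real.rpow_lt_rpow ht1.le ht2 h3
      have h2 : 0 < 2 * (1 - p) - 2 := by linarith
      exact mul_neg_of_pos_of_neg h2 (by linarith)
    · have hppos : 0 < p := by
        by_contra h
        push_neg at h
        exact hp' ⟨hge2, h⟩
      have h3 : 2 * (1 - p) - 3 < 0 := by linarith
      have hD : (1 + t) ^ (2 * (1 - p) - 3) < (1 - t) ^ (2 * (1 - p) - 3) :=
        Real.rpow_lt_rpow_of_neg ht1 ht2 h3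
      have h2 : 2 * (1 - p) - 2 < 0 := by linarith
      exact mul_neg_of_neg_of_pos h2 (by linarith)
  obtain ⟨hcont, hmono, hbij, hlim⟩ := Faux_props (2 * (1 - p)) hq0 hq1 hq3
  -- substitution x ↦ x ^ (1 - p)
  have heq : ∀ x ∈ Ioi (0:ℝ), ψ x = Faux (2 * (1 - p)) (x ^ (1 - p)) := by
    intro x hx
    have hx2 : (x ^ (1 - p)) ^ 2 = x ^ (2 * (1 - p)) := by
      rw [← Real.rpow_natCast (x ^ (1 - p)) 2, ← Real.rpow_mul (le_of_lt hx)]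
      congr 1
      push_cast; ring
    show (2 - (1 + x ^ (1 - p)) ^ (2 * (1 - p)) - (1 - x ^ (1 - p)) ^ (2 * (1 - p))) /
        (2 * (2 * p - 1) * (1 - p) * x ^ (2 * (1 - p))) = _
    simp only [Faux, N0]
    rw [hx2]
    congr 1
    ring
  have heqOn : EqOn ψ (Faux (2 * (1 - p)) ∘ fun x : ℝ => x ^ (1 - p)) (Ioc 0 1) :=
    fun x hx => heq x hx.1
  have hhmaps : MapsTo (fun x : ℝ => x ^ (1 - p)) (Ioc 0 1) (Ioc 0 1) := fun x hx =>
    ⟨Real.rpow_pos_of_pos hx.1 _, Real.rpow_le_one hx.1.le hx.2 h1p.le⟩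
  have hhmono : StrictMonoOn (fun x : ℝ => x ^ (1 - p)) (Ioc 0 1) := fun x hx y _ hxy =>
    Real.rpow_lt_rpow hx.1.le hxy h1p
  have hhcont : ContinuousOn (fun x : ℝ => x ^ (1 - p)) (Ioc 0 1) :=
    ContinuousOn.rpow_const continuousOn_id (fun x hx => Or.inl hx.1.ne')
  have hhbij : BijOn (fun x : ℝ => x ^ (1 - p)) (Ioc 0 1) (Ioc 0 1) := by
    refine ⟨hhmaps, hhmono.injOn, ?_⟩
    intro y hy
    refine ⟨y ^ (1 / (1 - p)),
      ⟨Real.rpow_pos_of_pos hy.1 _, Real.rpow_le_one hy.1.le hy.2 (by positivity)⟩, ?_⟩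
    show (y ^ (1 / (1 - p))) ^ (1 - p) = y
    rw [← Real.rpow_mul hy.1.le, one_div, inv_mul_cancel₀ h1p.ne', Real.rpow_one]
  -- value at 1
  have hd2 : (2 * p - 1) * (1 - p) ≠ 0 := by
    apply mul_ne_zero
    · intro h; apply hp''; linarith
    · exact sub_ne_zero.mpr (Ne.symm (ne_of_lt hp))
  have hF1 : Faux (2 * (1 - p)) 1 = (1 - 2 ^ (1 - 2 * p)) / ((2 * p - 1) * (1 - p)) := by
    have h2q : (2:ℝ) ^ (2 * (1 - p)) = 2 * 2 ^ (1 - 2 * p) := by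
      rw [show (2:ℝ) * (1 - p) = 1 + (1 - 2 * p) from by ring, Real.rpow_add two_pos,
        Real.rpow_one]
    have hd1 : 2 * (1 - p) * (1 - 2 * (1 - p)) * ((1:ℝ) ^ 2) ≠ 0 := by
      have : 2 * (1 - p) * (1 - 2 * (1 - p)) * ((1:ℝ) ^ 2) = 2 * ((2 * p - 1) * (1 - p)) := by
        ring
      rw [this]
      exact mul_ne_zero two_ne_zero hd2
    simp only [Faux, N0]
    rw [show (1:ℝ) - 1 = 0 from by ring, Real.zero_rpow hq0.ne',
      show (1:ℝ) + 1 = 2 from by norm_num, h2q]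
    rw [div_eq_div_iff hd1 hd2]
    ring
  refine ⟨(hcont.comp hhcont hhmaps).congr heqOn, ?_, ?_, ?_⟩
  · -- strict mono
    intro x hx y hy hxy
    rw [heq x hx.1, heq y hy.1]
    exact hmono (hhmaps hx) (hhmaps hy) (hhmono hx hy hxy)
  · -- bijection
    rw [← hF1]
    exact (hbij.comp hhbij).congr (fun x hx => (heqOn hx).symm)
  · -- limit
    have hhtend : Tendsto (fun x : ℝ => x ^ (1 - p)) (𝓝[>] (0:ℝ)) (𝓝[>] (0:ℝ)) := by
      rw [tendsto_nhdsWithin_iff]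
      constructor
      · have hc := (Real.continuousAt_rpow_const 0 (1 - p) (Or.inr h1p.le)).tendsto
        rw [Real.zero_rpow h1p.ne'] at hc
        exact hc.mono_left nhdsWithin_le_nhds
      · filter_upwards [self_mem_nhdsWithin] with x hx
        exact Real.rpow_pos_of_pos hx _
    refine (hlim.comp hhtend).congr' ?_
    filter_upwards [self_mem_nhdsWithin] with x hx
    exact (heq x hx).symm
end

section
/- Let p ∈ (-∞, 1), p ≠ 1/2, p ≠ -1/2, p ≠ 0. Then the inequality (2p-1)(1-p)/(1 - 2^{1-2p}) ≤ 1 holds if and only if p ∉ (-1/2, 0). Moreover, equality (2p-1)(1-p)/(1-2^{1-2p}) = 1 holds (among p ∈ (-∞,1) \ {1/2}) if and only if p ∈ {-1/2, 0}. -/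
open Set Real


noncomputable def hh (t : ℝ) : ℝ := Real.exp (Real.log 2 * t) - (t ^ 2 + t + 2) / 2

lemma hh_zero : hh 0 = 0 := by simp [hh]

lemma hh_one : hh 1 = 0 := by
  simp only [hh, mul_one, Real.exp_log two_pos]; norm_num

lemma hh_two : hh 2 = 0 := by
  have h : Real.log 2 * 2 = Real.log 2 + Real.log 2 := by ring
  simp only [hh, h, Real.exp_add, Real.exp_log two_pos]; norm_num

lemma hh_hasDerivAt (t : ℝ) :
    HasDerivAt hh (Real.log 2 * Real.exp (Real.log 2 * t) - (t + 1/2)) t := by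
  have e : HasDerivAt (fun x : ℝ => Real.exp (Real.log 2 * x))
      (Real.exp (Real.log 2 * t) * (Real.log 2 * 1)) t :=
    (Real.hasDerivAt_exp _).comp t ((hasDerivAt_id t).const_mul (Real.log 2))
  have p : HasDerivAt (fun x : ℝ => (x ^ 2 + x + 2) / 2)
      ((↑2 * t ^ (2 - 1) + 1) / 2) t := by
    have := (((hasDerivAt_pow 2 t).add (hasDerivAt_id t)).add_const 2).div_const 2
    simpa using this
  have := e.sub p
  exact this.congr_deriv (by norm_num; ring)

lemma deriv_hh : deriv hh = fun t => Real.log 2 * Real.exp (Real.log 2 * t) - (t + 1/2) :=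
  funext fun t => (hh_hasDerivAt t).deriv

lemma deriv2_hh :
    deriv (deriv hh) = fun t => (Real.log 2) ^ 2 * Real.exp (Real.log 2 * t) - 1 := by
  rw [deriv_hh]; funext t
  have e : HasDerivAt (fun x : ℝ => Real.log 2 * Real.exp (Real.log 2 * x))
      (Real.log 2 * (Real.exp (Real.log 2 * t) * (Real.log 2 * 1))) t :=
    (((Real.hasDerivAt_exp _).comp t ((hasDerivAt_id t).const_mul (Real.log 2)))).const_mul _
  have p : HasDerivAt (fun x : ℝ => x + 1/2) 1 t := (hasDerivAt_id t).add_const _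
  have := (e.sub p).deriv
  exact this.trans (by ring)

noncomputable def tz : ℝ := -2 * Real.log (Real.log 2) / Real.log 2

lemma log2_pos : (0:ℝ) < Real.log 2 := Real.log_pos one_lt_two

lemma sq_log2_lt : (Real.log 2) ^ 2 < 1/2 := by
  have h := Real.log_two_lt_d9
  have h0 := Real.log_two_gt_d9
  nlinarith

lemma sq_log2_gt : 1/4 < (Real.log 2) ^ 2 := by
  have h0 := Real.log_two_gt_d9
  nlinarith

lemma exp_tz : Real.exp (Real.log 2 * tz) = ((Real.log 2) ^ 2)⁻¹ := by
  have hL := log2_pos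
  have h : Real.log 2 * tz = -(2 * Real.log (Real.log 2)) := by
    unfold tz; field_simp
  rw [h, Real.exp_neg]
  congr 1
  have : (2:ℝ) * Real.log (Real.log 2) = Real.log (Real.log 2) + Real.log (Real.log 2) := by ring
  rw [this, Real.exp_add, Real.exp_log hL, sq]

lemma tz_mem : tz ∈ Ioo (1:ℝ) 2 := by
  have hL := log2_pos
  have h1 : Real.exp (Real.log 2 * 1) = 2 := by rw [mul_one, Real.exp_log two_pos]
  have h2 : Real.exp (Real.log 2 * 2) = 4 := by
    have : Real.log 2 * 2 = Real.log 2 + Real.log 2 := by ring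
    rw [this, Real.exp_add, Real.exp_log two_pos]; norm_num
  have hsq := sq_log2_lt
  have hsq' := sq_log2_gt
  have hpos : (0:ℝ) < (Real.log 2)^2 := by positivity
  have e1 : Real.exp (Real.log 2 * 1) < Real.exp (Real.log 2 * tz) := by
    rw [h1, exp_tz]
    rw [lt_inv_comm₀ two_pos hpos]
    linarith
  have e2 : Real.exp (Real.log 2 * tz) < Real.exp (Real.log 2 * 2) := by
    rw [h2, exp_tz]
    rw [inv_lt_comm₀ hpos (by norm_num)]
    linarith
  constructor
  · have := Real.exp_lt_exp.mp e1
    exact lt_of_mul_lt_mul_left this hL.le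
  · have := Real.exp_lt_exp.mp e2
    exact lt_of_mul_lt_mul_left this hL.le

lemma hh_cont : Continuous hh := by unfold hh; fun_prop

lemma hh_concave : StrictConcaveOn ℝ (Iic tz) hh := by
  apply strictConcaveOn_of_deriv2_neg (convex_Iic _) hh_cont.continuousOn
  intro x hx
  rw [interior_Iic] at hx
  have : deriv^[2] hh = deriv (deriv hh) := rfl
  rw [this, deriv2_hh]
  have hL := log2_pos
  have : Real.exp (Real.log 2 * x) < Real.exp (Real.log 2 * tz) :=
    Real.exp_lt_exp.mpr (by exact mul_lt_mul_of_pos_left hx hL)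
  rw [exp_tz] at this
  have hpos : (0:ℝ) < (Real.log 2)^2 := by positivity
  have := mul_lt_mul_of_pos_left this hpos
  rw [mul_inv_cancel₀ hpos.ne'] at this
  simpa using by linarith

lemma hh_convex : StrictConvexOn ℝ (Ici tz) hh := by
  apply strictConvexOn_of_deriv2_pos (convex_Ici _) hh_cont.continuousOn
  intro x hx
  rw [interior_Ici] at hx
  have : deriv^[2] hh = deriv (deriv hh) := rfl
  rw [this, deriv2_hh]
  have hL := log2_pos
  have : Real.exp (Real.log 2 * tz) < Real.exp (Real.log 2 * x) :=
    Real.exp_lt_exp.mpr (by exact mul_lt_mul_of_pos_left hx hL)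
  rw [exp_tz] at this
  have hpos : (0:ℝ) < (Real.log 2)^2 := by positivity
  have := mul_lt_mul_of_pos_left this hpos
  rw [mul_inv_cancel₀ hpos.ne'] at this
  simpa using by linarith

lemma hh_pos_01 {t : ℝ} (h0 : 0 < t) (h1 : t < 1) : 0 < hh t := by
  obtain ⟨htz1, htz2⟩ := tz_mem
  have key := hh_concave.2 (mem_Iic.2 (show (0:ℝ) ≤ tz by linarith))
    (mem_Iic.2 (show (1:ℝ) ≤ tz by linarith)) (show (0:ℝ) ≠ 1 by norm_num)
    (show (0:ℝ) < 1 - t by linarith) h0 (show 1 - t + t = 1 by ring)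
  rw [smul_eq_mul, smul_eq_mul, smul_eq_mul, smul_eq_mul, hh_zero, hh_one] at key
  have harg : (1 - t) * 0 + t * 1 = t := by ring
  rw [harg] at key
  linarith

lemma hh_neg_lt0 {t : ℝ} (h : t < 0) : hh t < 0 := by
  obtain ⟨htz1, htz2⟩ := tz_mem
  have h1 : (0:ℝ) < 1 - t := by linarith
  have key := hh_concave.2 (mem_Iic.2 (show t ≤ tz by linarith))
    (mem_Iic.2 (show (1:ℝ) ≤ tz by linarith)) (show t ≠ 1 by intro hc; linarith [hc ▸ h])
    (show (0:ℝ) < 1/(1-t) by positivity)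
    (show (0:ℝ) < -t/(1-t) by apply div_pos <;> linarith)
    (show 1/(1-t) + -t/(1-t) = 1 by field_simp; ring)
  rw [smul_eq_mul, smul_eq_mul, smul_eq_mul, smul_eq_mul, hh_one] at key
  have harg : 1/(1-t) * t + -t/(1-t) * 1 = 0 := by field_simp; ring
  rw [harg, hh_zero] at key
  nlinarith [one_div_pos.mpr h1]

lemma hh_neg_1tz {t : ℝ} (h1 : 1 < t) (h2 : t ≤ tz) : hh t < 0 := by
  obtain ⟨htz1, htz2⟩ := tz_mem
  have ht : (0:ℝ) < t := by linarith
  have key := hh_concave.2 (mem_Iic.2 (show (0:ℝ) ≤ tz by linarith))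
    (mem_Iic.2 h2) (show (0:ℝ) ≠ t by intro hc; linarith [hc ▸ h1])
    (show (0:ℝ) < (t-1)/t by apply div_pos <;> linarith)
    (show (0:ℝ) < 1/t by positivity)
    (show (t-1)/t + 1/t = 1 by field_simp; ring)
  rw [smul_eq_mul, smul_eq_mul, smul_eq_mul, smul_eq_mul, hh_zero] at key
  have harg : (t-1)/t * 0 + 1/t * t = 1 := by field_simp; ring
  rw [harg, hh_one] at key
  nlinarith [one_div_pos.mpr ht]

lemma hh_tz_neg : hh tz < 0 := hh_neg_1tz tz_mem.1 le_rfl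

lemma hh_neg_tz2 {t : ℝ} (h1 : tz < t) (h2 : t < 2) : hh t < 0 := by
  obtain ⟨htz1, htz2⟩ := tz_mem
  have hd : (0:ℝ) < 2 - tz := by linarith
  have key := hh_convex.2 (mem_Ici.2 (le_refl tz))
    (mem_Ici.2 (show tz ≤ 2 by linarith)) (show tz ≠ 2 by linarith)
    (show (0:ℝ) < (2-t)/(2-tz) by apply div_pos <;> linarith)
    (show (0:ℝ) < (t-tz)/(2-tz) by apply div_pos <;> linarith)
    (show (2-t)/(2-tz) + (t-tz)/(2-tz) = 1 by field_simp; ring)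
  rw [smul_eq_mul, smul_eq_mul, smul_eq_mul, smul_eq_mul, hh_two] at key
  have harg : (2-t)/(2-tz) * tz + (t-tz)/(2-tz) * 2 = t := by field_simp; ring
  rw [harg] at key
  have ha : (0:ℝ) < (2-t)/(2-tz) := by apply div_pos <;> linarith
  nlinarith [hh_tz_neg]

lemma hh_pos_2 {t : ℝ} (h : 2 < t) : 0 < hh t := by
  obtain ⟨htz1, htz2⟩ := tz_mem
  have hd : (0:ℝ) < t - tz := by linarith
  have key := hh_convex.2 (mem_Ici.2 (le_refl tz))
    (mem_Ici.2 (show tz ≤ t by linarith)) (show tz ≠ t by linarith)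
    (show (0:ℝ) < (t-2)/(t-tz) by apply div_pos <;> linarith)
    (show (0:ℝ) < (2-tz)/(t-tz) by apply div_pos <;> linarith)
    (show (t-2)/(t-tz) + (2-tz)/(t-tz) = 1 by field_simp; ring)
  rw [smul_eq_mul, smul_eq_mul, smul_eq_mul, smul_eq_mul] at key
  have harg : (t-2)/(t-tz) * tz + (2-tz)/(t-tz) * t = 2 := by field_simp; ring
  rw [harg, hh_two] at key
  have ha : (0:ℝ) < (t-2)/(t-tz) := by apply div_pos <;> linarith
  have hb : (0:ℝ) < (2-tz)/(t-tz) := by apply div_pos <;> linarith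
  nlinarith [hh_tz_neg]

lemma hh_neg_12 {t : ℝ} (h1 : 1 < t) (h2 : t < 2) : hh t < 0 := by
  rcases le_or_gt t tz with h | h
  · exact hh_neg_1tz h1 h
  · exact hh_neg_tz2 h h2

/-- for `p < 1` with `p ∉ {1/2, -1/2, 0}`,
`(2p-1)(1-p)/(1-2^{1-2p}) ≤ 1` iff `p ∉ (-1/2,0)`; moreover, for `p < 1`, `p ≠ 1/2`,
equality holds iff `p ∈ {-1/2, 0}`. -/
theorem stmt_9 :
    (∀ p : ℝ, p < 1 → p ≠ 1 / 2 → p ≠ -(1 / 2) → p ≠ 0 →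
      ((2 * p - 1) * (1 - p) / (1 - 2 ^ (1 - 2 * p)) ≤ 1 ↔
        p ∉ Set.Ioo (-(1 / 2) : ℝ) 0)) ∧
    (∀ p : ℝ, p < 1 → p ≠ 1 / 2 →
      ((2 * p - 1) * (1 - p) / (1 - 2 ^ (1 - 2 * p)) = 1 ↔
        (p = -(1 / 2) ∨ p = 0))) := by
  have hrw : ∀ p : ℝ, (2:ℝ) ^ (1 - 2 * p) = Real.exp (Real.log 2 * (1 - 2 * p)) := fun p =>
    Real.rpow_def_of_pos two_pos _
  have hnd : ∀ p : ℝ,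
      (2*p-1)*(1-p) - (1 - Real.exp (Real.log 2 * (1-2*p))) = hh (1-2*p) := by
    intro p; simp only [hh]; ring
  have hdsign_neg : ∀ p : ℝ, p < 1/2 → 1 - Real.exp (Real.log 2 * (1-2*p)) < 0 := by
    intro p hp
    have : (1:ℝ) < Real.exp (Real.log 2 * (1-2*p)) := by
      calc (1:ℝ) = Real.exp 0 := Real.exp_zero.symm
        _ < _ := Real.exp_lt_exp.mpr (by have := log2_pos; nlinarith)
    linarith
  have hdsign_pos : ∀ p : ℝ, 1/2 < p → 0 < 1 - Real.exp (Real.log 2 * (1-2*p)) := by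
    intro p hp
    have : Real.exp (Real.log 2 * (1-2*p)) < 1 := by
      calc Real.exp (Real.log 2 * (1-2*p)) < Real.exp 0 :=
            Real.exp_lt_exp.mpr (by have := log2_pos; nlinarith)
        _ = 1 := Real.exp_zero
    linarith
  constructor
  · intro p h1 h2 h3 h4
    rw [hrw p]
    have hheq := hnd p
    rcases lt_or_gt_of_ne h2 with hp | hp
    · have hdneg := hdsign_neg p hp
      rw [div_le_iff_of_neg hdneg, one_mul]
      constructor
      · intro hle hmem
        obtain ⟨hm1, hm2⟩ := hmem
        have := hh_neg_12 (t := 1-2*p) (by linarith) (by linarith)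
        linarith
      · intro hmem
        rcases lt_trichotomy p 0 with hp0 | hp0 | hp0
        · have hple : p ≤ -(1/2) := by
            by_contra hc; push_neg at hc; exact hmem ⟨hc, hp0⟩
          have hplt : p < -(1/2) := lt_of_le_of_ne hple h3
          have := hh_pos_2 (t := 1-2*p) (by linarith)
          linarith
        · exact absurd hp0 h4
        · have := hh_pos_01 (t := 1-2*p) (by linarith) (by linarith)
          linarith
    · have hdpos := hdsign_pos p hp
      have hht := hh_neg_lt0 (t := 1-2*p) (by linarith)
      constructor
      · intro _ hmem
        obtain ⟨_, hm2⟩ := hmem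
        linarith
      · intro _
        rw [div_le_one hdpos]; linarith
  · intro p h1 h2
    rw [hrw p]
    have hheq := hnd p
    have hdne : 1 - Real.exp (Real.log 2 * (1-2*p)) ≠ 0 := by
      rcases lt_or_gt_of_ne h2 with hp | hp
      · exact (hdsign_neg p hp).ne
      · exact (hdsign_pos p hp).ne'
    rw [div_eq_one_iff_eq hdne]
    constructor
    · intro heq
      have hhz : hh (1-2*p) = 0 := by linarith
      rcases lt_trichotomy (1-2*p) 1 with ha | ha | ha
      · rcases lt_trichotomy (1-2*p) 0 with hb | hb | hb
        · exact absurd hhz (hh_neg_lt0 hb).ne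
        · exact absurd (show p = 1/2 by linarith) h2
        · exact absurd hhz (hh_pos_01 hb ha).ne'
      · exact Or.inr (by linarith)
      · rcases lt_trichotomy (1-2*p) 2 with hb | hb | hb
        · exact absurd hhz (hh_neg_12 ha hb).ne
        · exact Or.inl (by linarith)
        · exact absurd hhz (hh_pos_2 hb).ne'
    · rintro (rfl | rfl)
      · have ht : (1:ℝ) - 2 * -(1/2) = 2 := by norm_num
        rw [ht] at hheq ⊢
        have := hh_two
        linarith
      · have ht : (1:ℝ) - 2 * 0 = 1 := by norm_num
        rw [ht] at hheq ⊢
        have := hh_one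
        linarith
end

section
/- Let p = 1/2 and define for h ∈ (0,1) and y ∈ [0,∞) the function φ(h,y) = (1/2)∫_{(y - a(h,y), y + a(h,y))} (a(h,y) - |u-y|)·(2/u) du, where a(h,y) = min(√h·√y, y). Then for y ≥ h one has φ(h,y) = ψ(h/y)·h with ψ(x) = [(1+√x)log(1+√x) + (1-√x)log(1-√x)]/x, and for 0 ≤ y < h one has φ(h,y) = 2·log(2)·y. -/
open Set Real MeasureTheory intervalIntegral

lemma key (y a : ℝ) (ha : 0 < a) (hay : a ≤ y) :
    ∫ u in Set.Ioo (y - a) (y + a), (a - |u - y|) * (2 / u) =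
      2 * ((y + a) * Real.log (y + a) + (y - a) * Real.log (y - a) - 2 * y * Real.log y) := by
  have hy : 0 < y := lt_of_lt_of_le ha hay
  rcases lt_or_eq_of_le hay with hlt | heq
  · -- a < y
    have h0 : 0 < y - a := by linarith
    have hle1 : y - a ≤ y := by linarith
    have hle2 : y ≤ y + a := by linarith
    have cong1 : EqOn (fun u => (a - |u - y|) * (2 / u))
        (fun u => 2 + (2 * (a - y)) * u⁻¹) (uIcc (y - a) y) := by
      intro u hu
      rw [uIcc_of_le hle1] at hu
      have hu0 : 0 < u := lt_of_lt_of_le h0 hu.1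
      have habs : |u - y| = y - u := by rw [abs_of_nonpos (by linarith [hu.2])]; ring
      show (a - |u - y|) * (2 / u) = 2 + (2 * (a - y)) * u⁻¹
      rw [habs]; field_simp; ring
    have cong2 : EqOn (fun u => (a - |u - y|) * (2 / u))
        (fun u => (2 * (a + y)) * u⁻¹ - 2) (uIcc y (y + a)) := by
      intro u hu
      rw [uIcc_of_le hle2] at hu
      have hu0 : 0 < u := lt_of_lt_of_le hy hu.1
      have habs : |u - y| = u - y := abs_of_nonneg (by linarith [hu.1])
      show (a - |u - y|) * (2 / u) = (2 * (a + y)) * u⁻¹ - 2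
      rw [habs]; field_simp; ring
    have int_inv1 : IntervalIntegrable (fun u : ℝ => u⁻¹) volume (y - a) y :=
      (ContinuousOn.inv₀ continuousOn_id (fun x hx => by
        rw [uIcc_of_le hle1] at hx; exact ne_of_gt (lt_of_lt_of_le h0 hx.1))).intervalIntegrable
    have int_inv2 : IntervalIntegrable (fun u : ℝ => u⁻¹) volume y (y + a) :=
      (ContinuousOn.inv₀ continuousOn_id (fun x hx => by
        rw [uIcc_of_le hle2] at hx; exact ne_of_gt (lt_of_lt_of_le hy hx.1))).intervalIntegrable
    have not1 : (0:ℝ) ∉ uIcc (y - a) y := by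
      rw [uIcc_of_le hle1]; rintro ⟨h1, -⟩; linarith
    have not2 : (0:ℝ) ∉ uIcc y (y + a) := by
      rw [uIcc_of_le hle2]; rintro ⟨h1, -⟩; linarith
    have I1 : ∫ u in (y - a)..y, (a - |u - y|) * (2 / u) =
        2 * a + (2 * (a - y)) * (Real.log y - Real.log (y - a)) := by
      rw [integral_congr cong1,
        integral_add intervalIntegrable_const (int_inv1.const_mul _),
        intervalIntegral.integral_const, intervalIntegral.integral_const_mul,
        integral_inv not1, Real.log_div (ne_of_gt hy) (ne_of_gt h0)]
      simp; ring
    have I2 : ∫ u in y..(y + a), (a - |u - y|) * (2 / u) =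
        (2 * (a + y)) * (Real.log (y + a) - Real.log y) - 2 * a := by
      rw [integral_congr cong2,
        integral_sub (int_inv2.const_mul _) intervalIntegrable_const,
        intervalIntegral.integral_const, intervalIntegral.integral_const_mul,
        integral_inv not2, Real.log_div (ne_of_gt (by linarith : (0:ℝ) < y + a)) (ne_of_gt hy)]
      simp; ring
    have ii1 : IntervalIntegrable (fun u => (a - |u - y|) * (2 / u)) volume (y - a) y := by
      refine ContinuousOn.intervalIntegrable ?_
      refine ContinuousOn.mul (Continuous.continuousOn (by continuity)) ?_
      exact ContinuousOn.div continuousOn_const continuousOn_id (fun x hx => by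
        rw [uIcc_of_le hle1] at hx; exact ne_of_gt (lt_of_lt_of_le h0 hx.1))
    have ii2 : IntervalIntegrable (fun u => (a - |u - y|) * (2 / u)) volume y (y + a) := by
      refine ContinuousOn.intervalIntegrable ?_
      refine ContinuousOn.mul (Continuous.continuousOn (by continuity)) ?_
      exact ContinuousOn.div continuousOn_const continuousOn_id (fun x hx => by
        rw [uIcc_of_le hle2] at hx; exact ne_of_gt (lt_of_lt_of_le hy hx.1))
    have := integral_add_adjacent_intervals ii1 ii2
    rw [I1, I2] at this
    have heq2 : ∫ u in Set.Ioo (y - a) (y + a), (a - |u - y|) * (2 / u) =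
        ∫ u in (y - a)..(y + a), (a - |u - y|) * (2 / u) := by
      rw [intervalIntegral.integral_of_le (by linarith), integral_Ioc_eq_integral_Ioo]
    rw [heq2, ← this]; ring
  · -- a = a
    subst heq
    have e1 : a - a = 0 := by ring
    have e2 : a + a = 2 * a := by ring
    rw [e1, e2]
    have hsplit : Ioo (0:ℝ) (2*a) = Ioo 0 a ∪ Ico a (2*a) :=
      (Ioo_union_Ico_eq_Ioo hy (by linarith)).symm
    have hdisj : Disjoint (Ioo (0:ℝ) a) (Ico a (2*a)) := by
      apply Set.disjoint_left.mpr
      rintro x ⟨-, hx2⟩ ⟨hx3, -⟩; linarith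
    have eq1 : EqOn (fun u => (a - |u - a|) * (2 / u)) (fun _ => (2:ℝ)) (Ioo 0 a) := by
      intro u hu
      have hu0 : u ≠ 0 := ne_of_gt hu.1
      have habs : |u - a| = a - u := by rw [abs_of_nonpos (by linarith [hu.2])]; ring
      show (a - |u - a|) * (2 / u) = 2
      rw [habs]
      field_simp [hu0]; ring
    have eq2 : EqOn (fun u => (a - |u - a|) * (2 / u)) (fun u => (2 * (2*a)) * u⁻¹ - 2)
        (uIcc a (2*a)) := by
      intro u hu
      rw [uIcc_of_le (by linarith)] at hu
      have hu0 : u ≠ 0 := ne_of_gt (lt_of_lt_of_le hy hu.1)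
      have habs : |u - a| = u - a := abs_of_nonneg (by linarith [hu.1])
      show (a - |u - a|) * (2 / u) = (2 * (2*a)) * u⁻¹ - 2
      rw [habs]; field_simp [hu0]; ring
    have int1 : IntegrableOn (fun u => (a - |u - a|) * (2 / u)) (Ioo 0 a) volume := by
      refine (IntegrableOn.congr_fun ?_ eq1.symm measurableSet_Ioo)
      exact (integrableOn_const_iff).mpr (Or.inr (by rw [Real.volume_Ioo]; exact ENNReal.ofReal_lt_top))
    have int2 : IntegrableOn (fun u => (a - |u - a|) * (2 / u)) (Ico a (2*a)) volume := by
      refine IntegrableOn.mono_set ?_ Ico_subset_Icc_self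
      refine ContinuousOn.integrableOn_Icc ?_
      refine ContinuousOn.mul (Continuous.continuousOn (by continuity)) ?_
      exact ContinuousOn.div continuousOn_const continuousOn_id
        (fun x hx => ne_of_gt (lt_of_lt_of_le hy hx.1))
    rw [hsplit, setIntegral_union hdisj measurableSet_Ico int1 int2]
    have v1 : ∫ u in Ioo (0:ℝ) a, (a - |u - a|) * (2 / u) = 2 * a := by
      rw [setIntegral_congr_fun measurableSet_Ioo eq1, setIntegral_const]
      simp [Real.volume_Ioo, ENNReal.toReal_ofReal hy.le]; rw [max_eq_left hy.le]; ring
    have not2 : (0:ℝ) ∉ uIcc a (2*a) := by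
      rw [uIcc_of_le (by linarith)]; rintro ⟨h1, -⟩; linarith
    have v2 : ∫ u in Ico a (2*a), (a - |u - a|) * (2 / u) =
        (2 * (2*a)) * (Real.log (2*a) - Real.log a) - 2 * a := by
      have int_inv2 : IntervalIntegrable (fun u : ℝ => u⁻¹) volume a (2*a) :=
        (ContinuousOn.inv₀ continuousOn_id (fun x hx => by
          rw [uIcc_of_le (by linarith : a ≤ 2*a)] at hx
          exact ne_of_gt (lt_of_lt_of_le hy hx.1))).intervalIntegrable
      rw [integral_Ico_eq_integral_Ioo, ← integral_Ioc_eq_integral_Ioo,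
        ← intervalIntegral.integral_of_le (by linarith : a ≤ 2*a),
        integral_congr eq2,
        integral_sub (int_inv2.const_mul _) intervalIntegrable_const,
        intervalIntegral.integral_const, intervalIntegral.integral_const_mul, integral_inv not2,
        Real.log_div (by positivity) (ne_of_gt hy)]
      simp; ring
    rw [v1, v2]
    have hlog : Real.log (2*a) = Real.log 2 + Real.log a := Real.log_mul two_ne_zero (ne_of_gt hy)
    simp [hlog]
    ring


/-- for `p = 1/2`, with scale factor `a(h,y) = min(√h √y, y)` and
`φ(h,y) = (1/2)∫_{(y-a, y+a)} (a - |u-y|)(2/u) du`, one has `φ(h,y) = ψ(h/y) h`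
for `y ≥ h` and `φ(h,y) = 2 log(2) y` for `0 ≤ y < h`. -/
theorem stmt_10 (h : ℝ) (hh : h ∈ Set.Ioo (0 : ℝ) 1) :
    let a : ℝ → ℝ := fun y => min (Real.sqrt h * Real.sqrt y) y
    let φ : ℝ → ℝ :=
      fun y => (1 / 2) * ∫ u in Set.Ioo (y - a y) (y + a y), (a y - |u - y|) * (2 / u)
    let ψ : ℝ → ℝ := fun x =>
      ((1 + Real.sqrt x) * Real.log (1 + Real.sqrt x) +
        (1 - Real.sqrt x) * Real.log (1 - Real.sqrt x)) / x
    (∀ y : ℝ, h ≤ y → φ y = ψ (h / y) * h) ∧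
    (∀ y : ℝ, 0 ≤ y → y < h → φ y = 2 * Real.log 2 * y) := by
  intro a φ ψ
  obtain ⟨hh0, hh1⟩ := hh
  constructor
  · intro y hy
    have hy0 : 0 < y := lt_of_lt_of_le hh0 hy
    have hsy : (0:ℝ) < Real.sqrt y := Real.sqrt_pos.mpr hy0
    have hA : a y = Real.sqrt h * Real.sqrt y := by
      apply min_eq_left
      calc Real.sqrt h * Real.sqrt y ≤ Real.sqrt y * Real.sqrt y :=
            mul_le_mul_of_nonneg_right (Real.sqrt_le_sqrt hy) hsy.le
        _ = y := Real.mul_self_sqrt hy0.le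
    set A : ℝ := Real.sqrt h * Real.sqrt y with hAdef
    have hApos : 0 < A := mul_pos (Real.sqrt_pos.mpr hh0) hsy
    have hAle : A ≤ y := hA ▸ min_le_right _ _
    set s : ℝ := Real.sqrt (h / y) with hsdef
    have hs : s = Real.sqrt h / Real.sqrt y := Real.sqrt_div' h hy0.le
    have hys : y * s = A := by
      rw [hs, hAdef]
      rw [mul_div_assoc']
      rw [mul_comm y (Real.sqrt h), mul_div_assoc, Real.div_sqrt]
    have hs0 : 0 ≤ s := Real.sqrt_nonneg _
    have hφ : φ y = (y + A) * Real.log (y + A) + (y - A) * Real.log (y - A)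
        - 2 * y * Real.log y := by
      show (1 / 2) * ∫ u in Set.Ioo (y - a y) (y + a y), (a y - |u - y|) * (2 / u) = _
      rw [hA, key y A hApos hAle]; ring
    rw [hφ]
    show _ = ((1 + s) * Real.log (1 + s) + (1 - s) * Real.log (1 - s)) / (h / y) * h
    have hhy : h / y ≠ 0 := by positivity
    rcases lt_or_eq_of_le hAle with hlt | heqA
    · have hs1 : s < 1 := by
        by_contra hc
        push_neg at hc
        nlinarith [hys]
      have e1 : y + A = y * (1 + s) := by rw [← hys]; ring
      have e2 : y - A = y * (1 - s) := by rw [← hys]; ring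
      rw [e1, e2, Real.log_mul hy0.ne' (by positivity),
        Real.log_mul hy0.ne' (ne_of_gt (by linarith : (0:ℝ) < 1 - s))]
      have hE : ((1 + s) * Real.log (1 + s) + (1 - s) * Real.log (1 - s)) / (h / y) * h
          = ((1 + s) * Real.log (1 + s) + (1 - s) * Real.log (1 - s)) * y := by
        rw [div_mul_eq_mul_div, div_eq_iff hhy]
        field_simp
      rw [hE]
      ring
    · have hs1 : s = 1 := by
        have h1 : y * s = y * 1 := by rw [hys, heqA, mul_one]
        exact mul_left_cancel₀ hy0.ne' h1
      have hs2 : s ^ 2 = h / y := Real.sq_sqrt (by positivity)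
      have hhy1 : h / y = 1 := by rw [← hs2, hs1]; norm_num
      have hEq : h = y := by
        field_simp at hhy1
        exact hhy1
      rw [heqA, hs1, hhy1, hEq]
      rw [show y + y = 2 * y by ring, show y - y = (0:ℝ) by ring,
        Real.log_mul two_ne_zero hy0.ne', Real.log_zero]
      norm_num
      ring
  · intro y hy0 hyh
    rcases eq_or_lt_of_le hy0 with rfl | hy
    · show (1 / 2) * ∫ u in Set.Ioo (0 - a 0) (0 + a 0), (a 0 - |u - 0|) * (2 / u) = _
      have : a 0 = 0 := by simp [show a 0 = min (Real.sqrt h * Real.sqrt 0) 0 from rfl]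
      rw [this]
      norm_num
    · have hA : a y = y := by
        apply min_eq_right
        calc y = Real.sqrt y * Real.sqrt y := (Real.mul_self_sqrt hy.le).symm
          _ ≤ Real.sqrt h * Real.sqrt y :=
            mul_le_mul_of_nonneg_right (Real.sqrt_le_sqrt hyh.le) (Real.sqrt_nonneg y)
      show (1 / 2) * ∫ u in Set.Ioo (y - a y) (y + a y), (a y - |u - y|) * (2 / u) = _
      rw [hA, key y y hy le_rfl]
      have e1 : y - y = 0 := by ring
      have e2 : y + y = 2 * y := by ring
      rw [e1, e2, Real.log_mul two_ne_zero hy.ne', Real.log_zero]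
      ring
end

section
/- Let p = 1/2, a(h,y) = min(√h·√y, y) for h ∈ (0,1), y ∈ [0,∞), and φ(h,y) = (1/2)∫_{(y-a(h,y), y+a(h,y))} (a(h,y)-|u-y|)·(2/u) du. Then for every h ∈ (0,1), h = inf{φ(h,y) : y > h/(2 log 2)} and sup{φ(h,y) : y > h/(2 log 2)} = 2·log(2)·h. In particular, h ≤ φ(h,y) ≤ 2·log(2)·h for all y > h/(2·log 2). -/
open Set Real MeasureTheory

lemma int_left (y a : ℝ) (hy : 0 < y) (ha : 0 < a) (hay : a ≤ y) :
    ∫ u in Set.Ioo (y-a) y, (a - |u - y|) * (2/u)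
      = 2*(a-y)*(Real.log y - Real.log (y-a)) + 2*a := by
  have hya : 0 ≤ y - a := by linarith
  have heq : Set.EqOn (fun u => (a - |u - y|) * (2/u))
      (fun u => 2*(a-y)*(1/u) + 2) (Set.Ioo (y-a) y) := by
    intro u hu
    have hu0 : 0 < u := lt_of_le_of_lt hya hu.1
    have : |u - y| = y - u := by rw [abs_of_nonpos (by linarith [hu.2])]; ring
    field_simp [this]
    rw [this]; ring
  rw [MeasureTheory.setIntegral_congr_fun measurableSet_Ioo heq]
  rcases eq_or_lt_of_le hay with rfl | hlt
  · simp only [sub_self, mul_zero, zero_mul, zero_add]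
    rw [MeasureTheory.setIntegral_const]
    simp [Real.volume_Ioo, ENNReal.toReal_ofReal hy.le]
    linarith [max_eq_left ha.le]
  · have hya' : 0 < y - a := by linarith
    rw [← MeasureTheory.integral_Ioc_eq_integral_Ioo,
      ← intervalIntegral.integral_of_le (by linarith)]
    have h0 : (0:ℝ) ∉ Set.uIcc (y-a) y := by
      rw [Set.uIcc_of_le (by linarith)]
      intro hc; exact absurd hc.1 (by linarith)
    have hint1 : IntervalIntegrable (fun u => 2*(a-y)*(1/u)) volume (y-a) y := by
      apply ContinuousOn.intervalIntegrable
      apply ContinuousOn.mul continuousOn_const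
      apply ContinuousOn.div continuousOn_const continuousOn_id
      intro x hx; intro hc; exact h0 (hc ▸ hx)
    have hint2 : IntervalIntegrable (fun _ : ℝ => (2:ℝ)) volume (y-a) y :=
      intervalIntegrable_const
    rw [intervalIntegral.integral_add hint1 hint2, intervalIntegral.integral_const_mul,
      integral_one_div h0, intervalIntegral.integral_const, Real.log_div (by linarith) (by linarith)]
    simp
    ring

lemma int_right (y a : ℝ) (hy : 0 < y) (ha : 0 < a) :
    ∫ u in Set.Ioo y (y+a), (a - |u - y|) * (2/u)
      = 2*(a+y)*(Real.log (y+a) - Real.log y) - 2*a := by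
  have heq : Set.EqOn (fun u => (a - |u - y|) * (2/u))
      (fun u => 2*(a+y)*(1/u) + (-2)) (Set.Ioo y (y+a)) := by
    intro u hu
    have hu0 : 0 < u := lt_trans hy hu.1
    have : |u - y| = u - y := abs_of_pos (by linarith [hu.1])
    field_simp [this]
    rw [this]; ring
  rw [MeasureTheory.setIntegral_congr_fun measurableSet_Ioo heq]
  rw [← MeasureTheory.integral_Ioc_eq_integral_Ioo,
    ← intervalIntegral.integral_of_le (by linarith)]
  have h0 : (0:ℝ) ∉ Set.uIcc y (y+a) := by
    rw [Set.uIcc_of_le (by linarith)]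
    intro hc; exact absurd hc.1 (by linarith)
  have hint1 : IntervalIntegrable (fun u => 2*(a+y)*(1/u)) volume y (y+a) := by
    apply ContinuousOn.intervalIntegrable
    apply ContinuousOn.mul continuousOn_const
    apply ContinuousOn.div continuousOn_const continuousOn_id
    intro x hx; intro hc; exact h0 (hc ▸ hx)
  rw [intervalIntegral.integral_add hint1 intervalIntegrable_const,
    intervalIntegral.integral_const_mul, integral_one_div h0,
    intervalIntegral.integral_const, Real.log_div (by linarith) (by linarith)]
  simp
  ring


lemma int_total (y a : ℝ) (hy : 0 < y) (ha : 0 < a) (hay : a ≤ y) :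
    (1/2) * ∫ u in Set.Ioo (y-a) (y+a), (a - |u - y|) * (2/u)
      = (y+a)*Real.log (y+a) + (y-a)*Real.log (y-a) - 2*y*Real.log y := by
  have hya : 0 ≤ y - a := by linarith
  set f : ℝ → ℝ := fun u => (a - |u - y|) * (2/u) with hf
  -- integrability on left piece
  have hil : IntegrableOn f (Set.Ioo (y-a) y) := by
    have heq : Set.EqOn (fun u => 2*(a-y)*(1/u) + 2) f (Set.Ioo (y-a) y) := by
      intro u hu
      have hu0 : 0 < u := lt_of_le_of_lt hya hu.1
      have habs : |u - y| = y - u := by rw [abs_of_nonpos (by linarith [hu.2])]; ring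
      simp only [hf, habs]
      field_simp
      ring
    apply MeasureTheory.IntegrableOn.congr_fun _ heq measurableSet_Ioo
    rcases eq_or_lt_of_le hay with rfl | hlt
    · simp only [sub_self, mul_zero, zero_mul, zero_add]
      exact integrableOn_const (by rw [Real.volume_Ioo]; exact ENNReal.ofReal_ne_top)
    · apply (ContinuousOn.integrableOn_Icc _).mono_set Set.Ioo_subset_Icc_self
      apply ContinuousOn.add _ continuousOn_const
      apply ContinuousOn.mul continuousOn_const
      apply ContinuousOn.div continuousOn_const continuousOn_id
      intro x hx hc
      simp only [id] at hc; rw [hc] at hx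
      exact absurd hx.1 (by linarith)
  have hir : IntegrableOn f (Set.Ioo y (y+a)) := by
    have heq : Set.EqOn (fun u => 2*(a+y)*(1/u) + (-2)) f (Set.Ioo y (y+a)) := by
      intro u hu
      have hu0 : 0 < u := lt_trans hy hu.1
      have habs : |u - y| = u - y := abs_of_pos (by linarith [hu.1])
      simp only [hf, habs]
      field_simp
      ring
    apply MeasureTheory.IntegrableOn.congr_fun _ heq measurableSet_Ioo
    apply (ContinuousOn.integrableOn_Icc _).mono_set Set.Ioo_subset_Icc_self
    apply ContinuousOn.add _ continuousOn_const
    apply ContinuousOn.mul continuousOn_const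
    apply ContinuousOn.div continuousOn_const continuousOn_id
    intro x hx hc
    simp only [id] at hc; rw [hc] at hx
    exact absurd hx.1 (by linarith)
  have hil' : IntegrableOn f (Set.Ioc (y-a) y) :=
    (integrableOn_Ioc_iff_integrableOn_Ioo).2 hil
  have hsplit : Set.Ioc (y-a) y ∪ Set.Ioo y (y+a) = Set.Ioo (y-a) (y+a) :=
    Set.Ioc_union_Ioo_eq_Ioo (by linarith) (by linarith)
  have hdisj : Disjoint (Set.Ioc (y-a) y) (Set.Ioo y (y+a)) := by
    apply Set.disjoint_left.2
    intro u hu1 hu2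
    exact absurd hu1.2 (not_le.2 hu2.1)
  have := MeasureTheory.setIntegral_union hdisj measurableSet_Ioo hil' hir (f := f) (μ := volume)
  rw [hsplit] at this
  rw [this, MeasureTheory.integral_Ioc_eq_integral_Ioo,
    int_left y a hy ha hay, int_right y a hy ha]
  ring

noncomputable def gfun (x : ℝ) : ℝ := (1+x)*Real.log (1+x) + (1-x)*Real.log (1-x)

lemma gfun_cont : Continuous gfun := by
  have h1 : Continuous (fun x : ℝ => (1+x)*Real.log (1+x)) :=
    Real.continuous_mul_log.comp (by continuity)
  have h2 : Continuous (fun x : ℝ => (1-x)*Real.log (1-x)) :=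
    Real.continuous_mul_log.comp (by continuity)
  exact h1.add h2

lemma gfun_one : gfun 1 = 2 * Real.log 2 := by
  simp [gfun]
  ring

lemma gfun_deriv {x : ℝ} (hx1 : -1 < x) (hx2 : x < 1) :
    HasDerivAt gfun (Real.log (1+x) - Real.log (1-x)) x := by
  have h1 : HasDerivAt (fun x : ℝ => (1+x)*Real.log (1+x)) (Real.log (1+x) + 1) x := by
    have := (Real.hasDerivAt_mul_log (x := 1+x) (by linarith)).comp x
      ((hasDerivAt_id x).const_add 1)
    simpa [Function.comp_def] using this
  have h2 : HasDerivAt (fun x : ℝ => (1-x)*Real.log (1-x)) (-(Real.log (1-x) + 1)) x := by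
    have := (Real.hasDerivAt_mul_log (x := 1-x) (by linarith)).comp x
      ((hasDerivAt_id x).const_sub 1)
    simpa [Function.comp_def] using this
  have := h1.add h2
  convert this using 1
  · rfl
  · rfl
  · rfl
  ring

lemma lfun_deriv {x : ℝ} (hx1 : -1 < x) (hx2 : x < 1) :
    HasDerivAt (fun x => Real.log (1+x) - Real.log (1-x)) (1/(1+x) + 1/(1-x)) x := by
  have h1 : HasDerivAt (fun x : ℝ => Real.log (1+x)) (1/(1+x)) x := by
    have := (Real.hasDerivAt_log (x := 1+x) (by linarith)).comp x
      ((hasDerivAt_id x).const_add 1)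
    simpa [one_div, Function.comp_def] using this
  have h2 : HasDerivAt (fun x : ℝ => Real.log (1-x)) (-(1/(1-x))) x := by
    have := (Real.hasDerivAt_log (x := 1-x) (by linarith)).comp x
      ((hasDerivAt_id x).const_sub 1)
    simpa [one_div, Function.comp_def] using this
  have := h1.sub h2
  convert this using 1
  · rfl
  · rfl
  · rfl
  ring

lemma log_cont_on {b : ℝ} (hb : b ≤ 1) :
    ContinuousOn (fun x => Real.log (1+x) - Real.log (1-x)) (Set.Ico 0 b) := by
  apply ContinuousOn.sub
  · apply ContinuousOn.log (by fun_prop)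
    intro x hx; nlinarith [hx.1]
  · apply ContinuousOn.log (by fun_prop)
    intro x hx; nlinarith [hx.2, hx.1]

lemma log_cont_on' {b : ℝ} (hb : b < 1) :
    ContinuousOn (fun x => Real.log (1+x) - Real.log (1-x)) (Set.Icc 0 b) := by
  apply ContinuousOn.sub
  · apply ContinuousOn.log (by fun_prop)
    intro x hx; nlinarith [hx.1]
  · apply ContinuousOn.log (by fun_prop)
    intro x hx; nlinarith [hx.2, hx.1]

-- I1 : 2x ≤ L x  on [0,1)
lemma I1 {x : ℝ} (hx0 : 0 ≤ x) (hx1 : x < 1) :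
    2*x ≤ Real.log (1+x) - Real.log (1-x) := by
  set A : ℝ → ℝ := fun x => Real.log (1+x) - Real.log (1-x) - 2*x with hA
  have hd : ∀ z ∈ Set.Ioo (0:ℝ) 1, HasDerivAt A (1/(1+z) + 1/(1-z) - 2) z := by
    intro z hz
    have := (lfun_deriv (by linarith [hz.1]) hz.2).sub ((hasDerivAt_id z).const_mul 2)
    simpa [hA, mul_comm, Pi.sub_def] using this
  have hmono : MonotoneOn A (Set.Ico 0 1) := by
    apply monotoneOn_of_deriv_nonneg (convex_Ico 0 1)
    · exact (log_cont_on le_rfl).sub (by fun_prop)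
    · intro z hz
      rw [interior_Ico] at hz
      exact (hd z hz).differentiableAt.differentiableWithinAt
    · intro z hz
      rw [interior_Ico] at hz
      rw [(hd z hz).deriv]
      have h1 : 0 < 1 + z := by linarith [hz.1]
      have h2 : 0 < 1 - z := by linarith [hz.2]
      rw [div_add_div _ _ (ne_of_gt h1) (ne_of_gt h2)]
      have hq : 0 < (1+z)*(1-z) := mul_pos h1 h2
      rw [sub_nonneg, le_div_iff₀ hq]
      nlinarith [hz.1]
  have h0 : A 0 = 0 := by simp [hA]
  have := hmono (Set.mem_Ico.2 ⟨le_rfl, by norm_num⟩) (Set.mem_Ico.2 ⟨hx0, hx1⟩) hx0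
  rw [h0] at this
  simp only [hA] at this
  linarith

-- g(x) ≥ x² on [0,1]
lemma gfun_ge {x : ℝ} (hx0 : 0 ≤ x) (hx1 : x ≤ 1) : x^2 ≤ gfun x := by
  set F : ℝ → ℝ := fun x => gfun x - x^2 with hF
  have hd : ∀ z ∈ Set.Ioo (0:ℝ) 1,
      HasDerivAt F (Real.log (1+z) - Real.log (1-z) - 2*z) z := by
    intro z hz
    have := (gfun_deriv (by linarith [hz.1]) hz.2).sub
      ((hasDerivAt_pow 2 z))
    simpa [hF, mul_comm, Pi.sub_def] using this
  have hmono : MonotoneOn F (Set.Icc 0 1) := by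
    apply monotoneOn_of_deriv_nonneg (convex_Icc 0 1)
    · exact (gfun_cont.continuousOn).sub (by fun_prop)
    · intro z hz
      rw [interior_Icc] at hz
      exact (hd z hz).differentiableAt.differentiableWithinAt
    · intro z hz
      rw [interior_Icc] at hz
      rw [(hd z hz).deriv]
      have := I1 hz.1.le hz.2
      linarith
  have h0 : F 0 = 0 := by simp [hF, gfun]
  have := hmono (Set.mem_Icc.2 ⟨le_rfl, by norm_num⟩) (Set.mem_Icc.2 ⟨hx0, hx1⟩) hx0
  rw [h0] at this
  simp only [hF] at this
  linarith

-- I2 : L x ≤ 2x/(1-x²) on [0,1)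
lemma I2 {x : ℝ} (hx0 : 0 ≤ x) (hx1 : x < 1) :
    Real.log (1+x) - Real.log (1-x) ≤ 2*x/(1-x^2) := by
  set B : ℝ → ℝ := fun x => 2*x/(1-x^2) - (Real.log (1+x) - Real.log (1-x)) with hB
  have hd : ∀ z ∈ Set.Ioo (0:ℝ) 1,
      HasDerivAt B (2*(1+z^2)/(1-z^2)^2 - (1/(1+z) + 1/(1-z))) z := by
    intro z hz
    have h2 : (1:ℝ) - z^2 ≠ 0 := by nlinarith [hz.1, hz.2]
    have hnum : HasDerivAt (fun x : ℝ => 2*x) 2 z := by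
      simpa using (hasDerivAt_id z).const_mul 2
    have hden : HasDerivAt (fun x : ℝ => 1 - x^2) (-(2*z)) z := by
      simpa using (hasDerivAt_pow 2 z).const_sub 1
    have h1 := hnum.div hden h2
    have := h1.sub (lfun_deriv (by linarith [hz.1]) hz.2)
    convert this using 1
    · rfl
    · rfl
    · rfl
    field_simp
    ring
  have hmono : MonotoneOn B (Set.Ico 0 1) := by
    apply monotoneOn_of_deriv_nonneg (convex_Ico 0 1)
    · apply ContinuousOn.sub _ (log_cont_on le_rfl)
      apply ContinuousOn.div (by fun_prop) (by fun_prop)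
      intro z hz; nlinarith [hz.1, hz.2]
    · intro z hz
      rw [interior_Ico] at hz
      exact (hd z hz).differentiableAt.differentiableWithinAt
    · intro z hz
      rw [interior_Ico] at hz
      rw [(hd z hz).deriv]
      have h1 : 0 < 1 + z := by linarith [hz.1]
      have h2 : 0 < 1 - z := by linarith [hz.2]
      have h3 : 0 < 1 - z^2 := by nlinarith
      rw [div_add_div _ _ (ne_of_gt h1) (ne_of_gt h2), sub_nonneg, div_le_div_iff₀ (by positivity) (by positivity)]
      nlinarith [hz.1, sq_nonneg z, sq_nonneg (z*(1-z^2))]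
  have h0 : B 0 = 0 := by simp [hB]
  have := hmono (Set.mem_Ico.2 ⟨le_rfl, by norm_num⟩) (Set.mem_Ico.2 ⟨hx0, hx1⟩) hx0
  rw [h0] at this
  simp only [hB] at this
  linarith

-- Q : x L(x) - 2 g(x) ≥ 0 on [0,1)
lemma Qfact {x : ℝ} (hx0 : 0 ≤ x) (hx1 : x < 1) :
    0 ≤ x * (Real.log (1+x) - Real.log (1-x)) - 2 * gfun x := by
  set Q : ℝ → ℝ := fun x => x * (Real.log (1+x) - Real.log (1-x)) - 2 * gfun x with hQ
  have hd : ∀ z ∈ Set.Ioo (0:ℝ) 1,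
      HasDerivAt Q (z * (1/(1+z) + 1/(1-z)) - (Real.log (1+z) - Real.log (1-z))) z := by
    intro z hz
    have h1 := (hasDerivAt_id z).mul (lfun_deriv (by linarith [hz.1]) hz.2)
    have h2 := (gfun_deriv (by linarith [hz.1]) hz.2).const_mul 2
    have := h1.sub h2
    convert this using 1
    · rfl
    · rfl
    · rfl
    simp
    ring
  have hmono : MonotoneOn Q (Set.Ico 0 1) := by
    apply monotoneOn_of_deriv_nonneg (convex_Ico 0 1)
    · exact (continuousOn_id.mul (log_cont_on le_rfl)).sub
        (continuousOn_const.mul gfun_cont.continuousOn)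
    · intro z hz
      rw [interior_Ico] at hz
      exact (hd z hz).differentiableAt.differentiableWithinAt
    · intro z hz
      rw [interior_Ico] at hz
      rw [(hd z hz).deriv]
      have h1 : 0 < 1 + z := by linarith [hz.1]
      have h2 : 0 < 1 - z := by linarith [hz.2]
      have h3 : 0 < 1 - z^2 := by nlinarith
      have hI2 := I2 hz.1.le hz.2
      have hzz : z * (1/(1+z) + 1/(1-z)) = 2*z/(1-z^2) := by
        field_simp
        ring
      rw [hzz]
      linarith
  have h0 : Q 0 = 0 := by simp [hQ, gfun]
  have := hmono (Set.mem_Ico.2 ⟨le_rfl, by norm_num⟩) (Set.mem_Ico.2 ⟨hx0, hx1⟩) hx0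
  rw [h0] at this
  simpa [hQ] using this

-- ψ = g(x)/x² monotone on (0,1]
lemma psi_mono : MonotoneOn (fun x => gfun x / x^2) (Set.Ioc 0 1) := by
  apply monotoneOn_of_deriv_nonneg (convex_Ioc 0 1)
  · apply ContinuousOn.div gfun_cont.continuousOn (by fun_prop)
    intro z hz
    have : 0 < z := hz.1
    positivity
  · intro z hz
    rw [interior_Ioc] at hz
    have hz0 : z ≠ 0 := ne_of_gt hz.1
    exact (((gfun_deriv (by linarith [hz.1]) hz.2).div (hasDerivAt_pow 2 z)
      (by positivity))).differentiableAt.differentiableWithinAt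
  · intro z hz
    rw [interior_Ioc] at hz
    have hz0 : 0 < z := hz.1
    have hd := (gfun_deriv (by linarith [hz.1]) hz.2).div (hasDerivAt_pow 2 z)
      (by positivity)
    rw [show (fun x => gfun x / x^2) = (gfun / fun x => x^2) from rfl, hd.deriv]
    have hQ := Qfact hz0.le hz.2
    have hnum : 0 ≤ (Real.log (1+z) - Real.log (1-z)) * z^2 - gfun z * (↑2 * z^(2-1)) := by
      norm_num
      nlinarith [hQ]
    positivity

lemma gfun_le {x : ℝ} (hx0 : 0 < x) (hx1 : x ≤ 1) : gfun x ≤ 2 * Real.log 2 * x^2 := by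
  have := psi_mono (Set.mem_Ioc.2 ⟨hx0, hx1⟩) (Set.mem_Ioc.2 ⟨one_pos, le_rfl⟩) hx1
  simp only at this
  rw [gfun_one] at this
  simp only [one_pow, div_one] at this
  calc gfun x = (gfun x / x^2) * x^2 := by field_simp
    _ ≤ 2 * Real.log 2 * x^2 := by
        apply mul_le_mul_of_nonneg_right this (by positivity)

-- L x ≤ 2x + 4x³ on [0,1/2]
lemma Lsmall {x : ℝ} (hx0 : 0 ≤ x) (hx1 : x ≤ 1/2) :
    Real.log (1+x) - Real.log (1-x) ≤ 2*x + 4*x^3 := by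
  set C : ℝ → ℝ := fun x => 2*x + 4*x^3 - (Real.log (1+x) - Real.log (1-x)) with hC
  have hd : ∀ z ∈ Set.Ioo (0:ℝ) (1/2),
      HasDerivAt C (2 + 12*z^2 - (1/(1+z) + 1/(1-z))) z := by
    intro z hz
    have h1 : HasDerivAt (fun x : ℝ => 2*x + 4*x^3) (2 + 12*z^2) z := by
      have ha := ((hasDerivAt_id z).const_mul 2).add ((hasDerivAt_pow 3 z).const_mul 4)
      convert ha using 1
      · rfl
      · rfl
      · rfl
      norm_num
      ring
    have := h1.sub (lfun_deriv (by linarith [hz.1]) (by linarith [hz.2]))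
    simpa [Pi.sub_def] using this
  have hmono : MonotoneOn C (Set.Icc 0 (1/2)) := by
    apply monotoneOn_of_deriv_nonneg (convex_Icc 0 (1/2))
    · exact (by fun_prop : ContinuousOn (fun x : ℝ => 2*x+4*x^3) _).sub
        (log_cont_on' (by norm_num))
    · intro z hz
      rw [interior_Icc] at hz
      exact (hd z hz).differentiableAt.differentiableWithinAt
    · intro z hz
      rw [interior_Icc] at hz
      rw [(hd z hz).deriv]
      have h1 : 0 < 1 + z := by linarith [hz.1]
      have h2 : 0 < 1 - z := by linarith [hz.2]
      have hz2 : z^2 ≤ 1/4 := by nlinarith [hz.1.le, hz.2.le]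
      rw [div_add_div _ _ (ne_of_gt h1) (ne_of_gt h2), sub_nonneg,
        div_le_iff₀ (by positivity)]
      nlinarith [hz2, sq_nonneg z, sq_nonneg (z^2)]
  have h0 : C 0 = 0 := by simp [hC]
  have := hmono (Set.mem_Icc.2 ⟨le_rfl, by norm_num⟩) (Set.mem_Icc.2 ⟨hx0, hx1⟩) hx0
  rw [h0] at this
  simp only [hC] at this
  linarith

lemma gfun_small {x : ℝ} (hx0 : 0 ≤ x) (hx1 : x ≤ 1/2) :
    gfun x ≤ x^2 + x^4 := by
  set H : ℝ → ℝ := fun x => x^2 + x^4 - gfun x with hH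
  have hd : ∀ z ∈ Set.Ioo (0:ℝ) (1/2),
      HasDerivAt H (2*z + 4*z^3 - (Real.log (1+z) - Real.log (1-z))) z := by
    intro z hz
    have h1 : HasDerivAt (fun x : ℝ => x^2 + x^4) (2*z + 4*z^3) z := by
      have ha := (hasDerivAt_pow 2 z).add (hasDerivAt_pow 4 z)
      convert ha using 1
      · rfl
      · rfl
      · rfl
      norm_num
    have := h1.sub (gfun_deriv (by linarith [hz.1]) (by linarith [hz.2]))
    simpa [Pi.sub_def] using this
  have hmono : MonotoneOn H (Set.Icc 0 (1/2)) := by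
    apply monotoneOn_of_deriv_nonneg (convex_Icc 0 (1/2))
    · exact (by fun_prop : ContinuousOn (fun x : ℝ => x^2+x^4) _).sub
        gfun_cont.continuousOn
    · intro z hz
      rw [interior_Icc] at hz
      exact (hd z hz).differentiableAt.differentiableWithinAt
    · intro z hz
      rw [interior_Icc] at hz
      rw [(hd z hz).deriv]
      have := Lsmall hz.1.le hz.2.le
      linarith
  have h0 : H 0 = 0 := by simp [hH, gfun]
  have := hmono (Set.mem_Icc.2 ⟨le_rfl, by norm_num⟩) (Set.mem_Icc.2 ⟨hx0, hx1⟩) hx0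
  rw [h0] at this
  simp only [hH] at this
  linarith

/-- for `p = 1/2`, with `a(h,y) = min(√h √y, y)` and
`φ(h,y) = (1/2)∫_{(y-a,y+a)} (a-|u-y|)(2/u) du`, for every `h ∈ (0,1)` the infimum of
`φ(h,·)` over `{y : y > h/(2 log 2)}` equals `h`, the supremum equals `2 log(2) h`,
and in particular `h ≤ φ(h,y) ≤ 2 log(2) h` on that set. -/
theorem stmt_11 (h : ℝ) (hh : h ∈ Set.Ioo (0 : ℝ) 1) :
    let a : ℝ → ℝ := fun y => min (Real.sqrt h * Real.sqrt y) y
    let φ : ℝ → ℝ :=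
      fun y => (1 / 2) * ∫ u in Set.Ioo (y - a y) (y + a y), (a y - |u - y|) * (2 / u)
    IsGLB (φ '' {y : ℝ | h / (2 * Real.log 2) < y}) h ∧
    IsLUB (φ '' {y : ℝ | h / (2 * Real.log 2) < y}) (2 * Real.log 2 * h) ∧
    (∀ y : ℝ, h / (2 * Real.log 2) < y → h ≤ φ y ∧ φ y ≤ 2 * Real.log 2 * h) := by
  intro a φ
  obtain ⟨h0, h1⟩ := hh
  have hlog2 : (1:ℝ)/2 < Real.log 2 := by
    have := Real.log_two_gt_d9; linarith
  have h2l : 1 < 2*Real.log 2 := by linarith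
  have hcd : h / (2*Real.log 2) < h := div_lt_self h0 h2l
  -- value of φ for y ≤ h
  have keyA : ∀ y : ℝ, 0 < y → y ≤ h → φ y = 2 * Real.log 2 * y := by
    intro y hy0 hyh
    have hay : a y = y := by
      apply min_eq_right
      calc y = Real.sqrt y * Real.sqrt y := (Real.mul_self_sqrt hy0.le).symm
        _ ≤ Real.sqrt h * Real.sqrt y :=
          mul_le_mul_of_nonneg_right (Real.sqrt_le_sqrt hyh) (Real.sqrt_nonneg y)
    show (1/2) * ∫ u in Set.Ioo (y - a y) (y + a y), (a y - |u - y|) * (2/u)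
      = 2 * Real.log 2 * y
    rw [hay, int_total y y hy0 hy0 le_rfl]
    rw [show y + y = 2*y by ring, Real.log_mul two_ne_zero (ne_of_gt hy0)]
    simp
    ring
  -- value of φ for y > h
  have keyB : ∀ y : ℝ, h < y → φ y = y * gfun (Real.sqrt h / Real.sqrt y) := by
    intro y hyh
    have hy0 : 0 < y := lt_trans h0 hyh
    have hsy : 0 < Real.sqrt y := Real.sqrt_pos.2 hy0
    have hsh : 0 < Real.sqrt h := Real.sqrt_pos.2 h0
    set x : ℝ := Real.sqrt h / Real.sqrt y with hxdef
    have hx0 : 0 < x := div_pos hsh hsy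
    have hx1 : x < 1 := by
      rw [hxdef, div_lt_one hsy]
      exact Real.sqrt_lt_sqrt h0.le hyh
    have hA : Real.sqrt h * Real.sqrt y = y * x := by
      rw [hxdef]
      field_simp
      rw [Real.sq_sqrt hy0.le]
    have hay : a y = y * x := by
      rw [show a y = min (Real.sqrt h * Real.sqrt y) y from rfl, hA]
      apply min_eq_left
      nlinarith
    have hAy : y * x ≤ y := by nlinarith
    have hA0 : 0 < y * x := by positivity
    show (1/2) * ∫ u in Set.Ioo (y - a y) (y + a y), (a y - |u - y|) * (2/u)
      = y * gfun x
    rw [hay, int_total y (y*x) hy0 hA0 hAy]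
    have e1 : y + y*x = y*(1+x) := by ring
    have e2 : y - y*x = y*(1-x) := by ring
    rw [e1, e2, Real.log_mul (ne_of_gt hy0) (by positivity),
      Real.log_mul (ne_of_gt hy0) (by nlinarith)]
    simp only [gfun]
    ring
  have hx2 : ∀ y : ℝ, 0 < y → (Real.sqrt h / Real.sqrt y)^2 = h/y := by
    intro y hy0
    rw [div_pow, Real.sq_sqrt h0.le, Real.sq_sqrt hy0.le]
  -- bounds
  have bound : ∀ y : ℝ, h / (2 * Real.log 2) < y → h ≤ φ y ∧ φ y ≤ 2 * Real.log 2 * h := by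
    intro y hy
    have hy0 : 0 < y := lt_trans (by positivity) hy
    rcases le_or_gt y h with hyh | hyh
    · rw [keyA y hy0 hyh]
      constructor
      · rw [div_lt_iff₀ (by linarith)] at hy
        linarith [hy]
      · nlinarith
    · rw [keyB y hyh]
      set x : ℝ := Real.sqrt h / Real.sqrt y with hxdef
      have hsy : 0 < Real.sqrt y := Real.sqrt_pos.2 hy0
      have hsh : 0 < Real.sqrt h := Real.sqrt_pos.2 h0
      have hx0 : 0 < x := div_pos hsh hsy
      have hx1 : x < 1 := by
        rw [hxdef, div_lt_one hsy]
        exact Real.sqrt_lt_sqrt h0.le hyh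
      have hxx : y * x^2 = h := by
        rw [hxdef, hx2 y hy0]
        field_simp
      constructor
      · have := gfun_ge hx0.le hx1.le
        nlinarith
      · have := gfun_le hx0 hx1.le
        nlinarith [Real.log_pos (by norm_num : (1:ℝ) < 2)]
  refine ⟨⟨?_, ?_⟩, ?_, bound⟩
  · -- h is a lower bound
    rintro _ ⟨y, hy, rfl⟩
    exact (bound y hy).1
  · -- h is the greatest lower bound
    intro b hb
    by_contra hbh
    push_neg at hbh
    set ε : ℝ := b - h with hε
    have hε0 : 0 < ε := by linarith
    set y : ℝ := 4*h + h^2/ε + 1 with hy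
    have hq0 : 0 ≤ h^2/ε := by positivity
    have hy4 : 4*h ≤ y := by rw [hy]; linarith
    have hyh : h < y := by rw [hy]; linarith
    have hy0 : 0 < y := lt_trans h0 hyh
    have hyε : h^2/ε < y := by rw [hy]; linarith
    have hydom : h / (2*Real.log 2) < y := lt_trans hcd hyh
    clear_value y
    have hmem : φ y ∈ φ '' {y : ℝ | h / (2 * Real.log 2) < y} := ⟨y, hydom, rfl⟩
    have hble := hb hmem
    set x : ℝ := Real.sqrt h / Real.sqrt y with hxdef
    have hsy : 0 < Real.sqrt y := Real.sqrt_pos.2 hy0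
    have hsh : 0 < Real.sqrt h := Real.sqrt_pos.2 h0
    have hx0 : 0 < x := div_pos hsh hsy
    have hxsq : x^2 = h/y := hx2 y hy0
    have hxhalf : x ≤ 1/2 := by
      have : x^2 ≤ 1/4 := by
        rw [hxsq, div_le_iff₀ hy0]
        linarith
      nlinarith
    have hxval : y * x^2 = h := by
      rw [hxsq]; field_simp
    have hphi : φ y ≤ h + h^2/y := by
      rw [keyB y hyh, ← hxdef]
      have hg := gfun_small hx0.le hxhalf
      have h4 : y * x^4 = h^2/y := by
        have : x^4 = (x^2)^2 := by ring
        rw [this, hxsq]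
        field_simp
      have h5 : y * (x^2 + x^4) = h + h^2/y := by rw [mul_add, hxval, h4]
      have h6 := mul_le_mul_of_nonneg_left hg hy0.le
      linarith
    have : h^2/y < ε := by
      rw [div_lt_iff₀ hy0]
      calc h^2 = (h^2/ε) * ε := by field_simp
        _ < y * ε := mul_lt_mul_of_pos_right hyε hε0
        _ = ε * y := by ring
    linarith
  · -- LUB
    apply IsGreatest.isLUB
    constructor
    · exact ⟨h, hcd, by rw [keyA h h0 le_rfl]⟩
    · rintro _ ⟨y, hy, rfl⟩
      exact (bound y hy).2
end

section
/- Let Y, Y^h (h in a set of parameters tending to 0) be continuous real-valued processes on a probability space with a fixed measure P, let l ∈ ℝ, T ∈ [0,∞), ε > 0, and define H_l(Z) = inf{t ≥ 0 : Z_t = l} (inf ∅ = ∞). Assume: (a) for every δ > 0 there exists l̄ > l with P[(H_l(Y) ∧ T) - (H_{l̄}(Y) ∧ T) ≤ ε/2] > 1 - δ/2, and (b) ‖Y^h - Y‖_{C[0,T]} → 0 in probability as h → 0, and the functional x ↦ H_{l̄}(x) ∧ T on C([0,T],ℝ) is P-a.s. continuous at Y for each l̄ > l. Then P[(H_l(Y)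 ∧ T) ≤ (H_l(Y^h) ∧ T) + ε] → 1 as h → 0. -/
open MeasureTheory Filter Set
open scoped ENNReal

/-- let `Y` and `Y^h` be continuous processes with values in `[l,∞)`,
and let `HT b z = (inf{t ∈ [0,T] : z t = b}) ∧ T` denote the capped hitting time.
Assume (a) for every `δ > 0` there is `l̄ > l` with
`P[HT l Y - HT l̄ Y ≤ ε/2] > 1 - δ/2`; and (b) `‖Y^h - Y‖_{C[0,T]} → 0` in
probability as `h → 0+` and, for each `l̄ > l`, the functional `x ↦ HT l̄ x` on
`C([0,T],ℝ)` is `P`-a.s. continuous at `Y`. Then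
`P[HT l Y ≤ HT l Y^h + ε] → 1` as `h → 0+`. -/
theorem stmt_15 {Ω : Type*} [MeasurableSpace Ω] (P : Measure Ω)
    [IsProbabilityMeasure P]
    (Y : Ω → ℝ → ℝ) (Yh : ℝ → Ω → ℝ → ℝ)
    (hYc : ∀ ω, Continuous (Y ω)) (hYhc : ∀ h ω, Continuous (Yh h ω))
    (l T ε : ℝ) (hT : 0 ≤ T) (hε : 0 < ε)
    (hYl : ∀ ω t, 0 ≤ t → l ≤ Y ω t) (hYhl : ∀ h ω t, 0 ≤ t → l ≤ Yh h ω t)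
    -- capped hitting time for full paths
    (HT : ℝ → (ℝ → ℝ) → ℝ)
    (hHT : ∀ b z, HT b z = sInf ({t : ℝ | t ∈ Set.Icc 0 T ∧ z t = b} ∪ {T}))
    -- capped hitting-time functional on C([0,T],ℝ)
    (HTc : ℝ → C(Set.Icc (0 : ℝ) T, ℝ) → ℝ)
    (hHTc : ∀ b x, HTc b x =
      sInf ({t : ℝ | ∃ ht : t ∈ Set.Icc (0 : ℝ) T, x ⟨t, ht⟩ = b} ∪ {T}))
    -- hypothesis (a)
    (ha : ∀ δ : ℝ, 0 < δ → ∃ lbar : ℝ, l < lbar ∧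
      ENNReal.ofReal (1 - δ / 2) <
        P {ω | HT l (Y ω) - HT lbar (Y ω) ≤ ε / 2})
    -- hypothesis (b): sup-norm convergence in probability on [0,T]
    (hb1 : ∀ δ : ℝ, 0 < δ →
      Tendsto (fun h : ℝ =>
          P {ω | δ < sSup ((fun t => |Yh h ω t - Y ω t|) '' Set.Icc 0 T)})
        (nhdsWithin 0 (Set.Ioi 0)) (nhds 0))
    -- hypothesis (b): a.s. continuity of the capped hitting-time functional at Y
    (hb2 : ∀ lbar : ℝ, l < lbar → ∀ᵐ ω ∂P,
      ContinuousAt (HTc lbar)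
        ⟨fun t : Set.Icc (0 : ℝ) T => Y ω t, (hYc ω).comp continuous_subtype_val⟩) :
    Tendsto (fun h : ℝ => P {ω | HT l (Y ω) ≤ HT l (Yh h ω) + ε})
      (nhdsWithin 0 (Set.Ioi 0)) (nhds 1) := by
  classical
  -- basic facts about the capped hitting time at level `l`
  have hbdd : ∀ z : ℝ → ℝ, BddBelow ({t : ℝ | t ∈ Set.Icc 0 T ∧ z t = l} ∪ {T}) := by
    intro z
    refine ⟨0, ?_⟩
    rintro t (⟨⟨h0, _⟩, _⟩ | rfl)
    · exact h0
    · exact hT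
  have hne : ∀ z : ℝ → ℝ, ({t : ℝ | t ∈ Set.Icc 0 T ∧ z t = l} ∪ {T} : Set ℝ).Nonempty :=
    fun z => ⟨T, Or.inr rfl⟩
  have hleT : ∀ z : ℝ → ℝ, HT l z ≤ T := by
    intro z
    rw [hHT]
    exact csInf_le (hbdd z) (Or.inr rfl)
  have hHTle : ∀ (z : ℝ → ℝ) (x : ℝ), 0 ≤ x → x ≤ T → z x = l → HT l z ≤ x := by
    intro z x h0 h1 h2
    rw [hHT]
    exact csInf_le (hbdd z) (Or.inl ⟨⟨h0, h1⟩, h2⟩)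
  have hmem : ∀ z : ℝ → ℝ, Continuous z → HT l z < T →
      0 ≤ HT l z ∧ HT l z < T ∧ z (HT l z) = l := by
    intro z hz hlt
    have hcl : IsClosed ({t : ℝ | t ∈ Set.Icc 0 T ∧ z t = l} ∪ {T} : Set ℝ) := by
      refine IsClosed.union ?_ isClosed_singleton
      have hEq : {t : ℝ | t ∈ Set.Icc 0 T ∧ z t = l} = Set.Icc 0 T ∩ z ⁻¹' {l} := by
        ext t; simp [Set.mem_Icc, and_assoc]
      rw [hEq]
      exact isClosed_Icc.inter (isClosed_singleton.preimage hz)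
    have hmem' := hcl.csInf_mem (hne z) (hbdd z)
    rw [← hHT l z] at hmem'
    rcases hmem' with ⟨⟨h0, _⟩, h2⟩ | h
    · exact ⟨h0, hlt, h2⟩
    · exact absurd (Set.eq_of_mem_singleton h) (ne_of_lt hlt)
  -- the increasing family of good events
  set G : ℕ → Set Ω := fun n =>
    {ω | ∀ s : ℝ, 0 ≤ s → s < T → Y ω s ≤ l + 1 / ((n : ℝ) + 1) → HT l (Y ω) ≤ s + ε}
    with hG
  have hGmono : Monotone G := by
    intro m n hmn ω hω s hs0 hsT hYs
    refine hω s hs0 hsT (hYs.trans ?_)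
    have : 1 / ((n : ℝ) + 1) ≤ 1 / ((m : ℝ) + 1) := by
      apply one_div_le_one_div_of_le
      · positivity
      · exact_mod_cast Nat.succ_le_succ hmn
    linarith
  -- every ω eventually belongs to some G n
  have hGunion : ∀ ω, ∃ n : ℕ, ω ∈ G n := by
    intro ω
    by_cases hH : HT l (Y ω) ≤ ε
    · exact ⟨0, fun s hs0 _ _ => hH.trans (by linarith)⟩
    push_neg at hH
    have huT : 0 ≤ min (HT l (Y ω) - ε) T := le_min (by linarith) hT
    have hpos : ∀ x ∈ Set.Icc (0 : ℝ) (min (HT l (Y ω) - ε) T), l < Y ω x := by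
      rintro x ⟨hx0, hxu⟩
      rcases (hYl ω x hx0).lt_or_eq with h | h
      · exact h
      · exfalso
        have hxT : x ≤ T := hxu.trans (min_le_right _ _)
        have := hHTle (Y ω) x hx0 hxT h.symm
        have hxu' : x ≤ HT l (Y ω) - ε := hxu.trans (min_le_left _ _)
        linarith
    obtain ⟨a, ha', hmin⟩ :=
      (isCompact_Icc (a := (0:ℝ)) (b := min (HT l (Y ω) - ε) T)).exists_forall_le'
        ((hYc ω).continuousOn) hpos
    obtain ⟨n, hn⟩ := exists_nat_one_div_lt (ε := a - l) (by linarith)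
    refine ⟨n, fun s hs0 hsT hYs => ?_⟩
    by_contra hcon
    push_neg at hcon
    have hsu : s ≤ min (HT l (Y ω) - ε) T := le_min (by linarith) hsT.le
    have := hmin s ⟨hs0, hsu⟩
    linarith
  -- measure of G n tends to 1
  have hGsup : (⨆ n, P (G n)) = 1 := by
    have h1 : (⋃ n, G n) = Set.univ := by
      ext ω
      simp only [Set.mem_iUnion, Set.mem_univ, iff_true]
      exact hGunion ω
    have := (hGmono.directed_le).measure_iUnion (μ := P)
    rw [h1] at this
    simpa using this.symm
  -- finish via ENNReal.tendsto_nhds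
  rw [ENNReal.tendsto_nhds ENNReal.one_ne_top]
  intro η hη
  have hη2 : (0 : ℝ≥0∞) < η / 2 := ENNReal.half_pos hη.ne'
  have h1lt : (1 : ℝ≥0∞) - η / 2 < ⨆ n, P (G n) := by
    rw [hGsup]
    exact ENNReal.sub_lt_self ENNReal.one_ne_top one_ne_zero hη2.ne'
  obtain ⟨n, hn⟩ := lt_iSup_iff.mp h1lt
  have hδn : (0 : ℝ) < 1 / ((n : ℝ) + 1) := by positivity
  have hbad := (hb1 _ hδn).eventually_lt_const hη2
  filter_upwards [hbad] with h hbadh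
  constructor
  · -- lower bound
    have hsub : G n ⊆ {ω | HT l (Y ω) ≤ HT l (Yh h ω) + ε} ∪
        {ω | 1 / ((n : ℝ) + 1) < sSup ((fun t => |Yh h ω t - Y ω t|) '' Set.Icc 0 T)} := by
      intro ω hω
      by_cases hb : 1 / ((n : ℝ) + 1) <
          sSup ((fun t => |Yh h ω t - Y ω t|) '' Set.Icc 0 T)
      · exact Or.inr hb
      push_neg at hb
      left
      show HT l (Y ω) ≤ HT l (Yh h ω) + ε
      rcases lt_or_ge (HT l (Yh h ω)) T with hlt | hge
      · obtain ⟨hs0, hsT, hsl⟩ := hmem (Yh h ω) (hYhc h ω) hlt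
        have hmemIcc : HT l (Yh h ω) ∈ Set.Icc (0 : ℝ) T := ⟨hs0, hsT.le⟩
        have hbddA : BddAbove ((fun t => |Yh h ω t - Y ω t|) '' Set.Icc 0 T) :=
          (isCompact_Icc.image_of_continuousOn
            (((hYhc h ω).sub (hYc ω)).abs.continuousOn)).bddAbove
        have hdiff : |Yh h ω (HT l (Yh h ω)) - Y ω (HT l (Yh h ω))| ≤ 1 / ((n : ℝ) + 1) :=
          (le_csSup hbddA (Set.mem_image_of_mem _ hmemIcc)).trans hb
        have hYs : Y ω (HT l (Yh h ω)) ≤ l + 1 / ((n : ℝ) + 1) := by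
          rw [hsl] at hdiff
          have := abs_le.mp hdiff
          linarith [this.1]
        exact hω _ hs0 hsT hYs
      · have := hleT (Y ω)
        linarith
    calc (1 : ℝ≥0∞) - η ≤ P {ω | HT l (Y ω) ≤ HT l (Yh h ω) + ε} := by
          rw [tsub_le_iff_right]
          calc (1 : ℝ≥0∞) ≤ P (G n) + η / 2 := by
                rw [← tsub_le_iff_right]; exact hn.le
            _ ≤ (P {ω | HT l (Y ω) ≤ HT l (Yh h ω) + ε} +
                  P {ω | 1 / ((n : ℝ) + 1) <
                    sSup ((fun t => |Yh h ω t - Y ω t|) '' Set.Icc 0 T)}) + η / 2 := by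
                gcongr
                exact le_trans (measure_mono hsub) (measure_union_le _ _)
            _ ≤ P {ω | HT l (Y ω) ≤ HT l (Yh h ω) + ε} + (η / 2 + η / 2) := by
                rw [add_assoc]
                gcongr
            _ = P {ω | HT l (Y ω) ≤ HT l (Yh h ω) + ε} + η := by
                rw [ENNReal.add_halves]
      _ ≤ P {ω | HT l (Y ω) ≤ HT l (Yh h ω) + ε} := le_rfl
  · exact le_trans prob_le_one le_self_add
end
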